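/- arXiv:2311.05822 — 4 statements merged into one kernel-verified Lean document; each statement's English description precedes it below -/
import Mathlib

section
/- Fix an integer N ≥ 1, a probability vector π ∈ ℝ^N (π_{n'} ≥ 0, Σ_{n'} π_{n'} = 1), positive reals a_1,…,a_N, parameters β ∈ (0,1), τ_C ≥ 0, γ > 0, s > 0, υ ∈ (0,1), R > 0 and r_1,…,r_N > −1. Define g(θ) = Σ_{n'} π_{n'} ν_γ(a_{n'} R_{n'}(θ)) for θ ∈ [0,1], let θ* ∈ [0,1] be a maximizer of g over [0,1], and set κ = ν_γ^{-1}(g(θ*)). Then for every c ∈ (0, s/(1+τ_C)) and every θ ∈ [0,1], exp((1−β)·log c + β·log ν_γ^{-1}(Σ_{n'} π_{n'} ν_γ(a_{n'} R_{n'}(θ)(s−(1+τ_C)c)))) ≤ ((1−β)/(1+τ_C))^{1−β} (βκ)^β s, and equality holds at c = (1−β)s/(1+τ_C) and θ = θ*. -/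
/-- The Box–Cox transformation `ν_γ` on `(0,∞)`. -/
noncomputable def boxCox (γ c : ℝ) : ℝ :=
  if γ = 1 then Real.log c else (c ^ (1 - γ) - 1) / (1 - γ)

/-- The inverse of the Box–Cox transformation `ν_γ` (on its range). -/
noncomputable def boxCoxInv (γ y : ℝ) : ℝ :=
  if γ = 1 then Real.exp y else (1 + (1 - γ) * y) ^ (1 / (1 - γ))

lemma sum_wpos {N : ℕ} (p x : Fin N → ℝ) (hp : ∀ n, 0 ≤ p n) (hp1 : ∑ n, p n = 1)
    (hx : ∀ n, 0 < x n) : 0 < ∑ n, p n * x n := by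
  obtain ⟨n₀, hn₀⟩ : ∃ n, 0 < p n := by
    by_contra h
    push_neg at h
    have h0 : ∑ n, p n = 0 := Finset.sum_eq_zero fun n _ => le_antisymm (h n) (hp n)
    linarith
  have h1 : p n₀ * x n₀ ≤ ∑ n, p n * x n :=
    Finset.single_le_sum (fun n _ => mul_nonneg (hp n) (hx n).le) (Finset.mem_univ n₀)
  exact lt_of_lt_of_le (mul_pos hn₀ (hx n₀)) h1

lemma sum_boxCox_eq {N : ℕ} (p : Fin N → ℝ) (hp1 : ∑ n, p n = 1) (γ : ℝ) (hγ1 : γ ≠ 1)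
    (c : Fin N → ℝ) :
    ∑ n, p n * boxCox γ (c n) = ((∑ n, p n * c n ^ (1 - γ)) - 1) / (1 - γ) := by
  simp only [boxCox, if_neg hγ1]
  have h : ∀ n ∈ Finset.univ, p n * ((c n ^ (1 - γ) - 1) / (1 - γ))
      = (p n * c n ^ (1 - γ) - p n) / (1 - γ) := fun n _ => by ring
  rw [Finset.sum_congr rfl h, ← Finset.sum_div, Finset.sum_sub_distrib, hp1]

lemma one_add_sum_boxCox {N : ℕ} (p : Fin N → ℝ) (hp1 : ∑ n, p n = 1) (γ : ℝ) (hγ1 : γ ≠ 1)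
    (c : Fin N → ℝ) :
    1 + (1 - γ) * (∑ n, p n * boxCox γ (c n)) = ∑ n, p n * c n ^ (1 - γ) := by
  have h0 : (1:ℝ) - γ ≠ 0 := sub_ne_zero.mpr fun h => hγ1 h.symm
  rw [sum_boxCox_eq p hp1 γ hγ1 c]
  field_simp
  ring

lemma boxCoxInv_sum_pos {N : ℕ} (p : Fin N → ℝ) (hp : ∀ n, 0 ≤ p n) (hp1 : ∑ n, p n = 1)
    (γ : ℝ) (c : Fin N → ℝ) (hc : ∀ n, 0 < c n) :
    0 < boxCoxInv γ (∑ n, p n * boxCox γ (c n)) := by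
  by_cases h1 : γ = 1
  · simp only [boxCoxInv, if_pos h1]; exact Real.exp_pos _
  · have hS : 0 < ∑ n, p n * c n ^ (1 - γ) :=
      sum_wpos p _ hp hp1 fun n => Real.rpow_pos_of_pos (hc n) _
    simp only [boxCoxInv, if_neg h1]
    rw [one_add_sum_boxCox p hp1 γ h1 c]
    exact Real.rpow_pos_of_pos hS _

lemma boxCoxInv_sum_scale {N : ℕ} (p : Fin N → ℝ) (hp : ∀ n, 0 ≤ p n) (hp1 : ∑ n, p n = 1)
    (γ : ℝ) (c : Fin N → ℝ) (hc : ∀ n, 0 < c n) (w : ℝ) (hw : 0 < w) :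
    boxCoxInv γ (∑ n, p n * boxCox γ (c n * w))
      = w * boxCoxInv γ (∑ n, p n * boxCox γ (c n)) := by
  by_cases h1 : γ = 1
  · simp only [boxCox, boxCoxInv, if_pos h1]
    have h : ∀ n ∈ Finset.univ, p n * Real.log (c n * w)
        = p n * Real.log (c n) + p n * Real.log w := fun n _ => by
      rw [Real.log_mul (hc n).ne' hw.ne']; ring
    rw [Finset.sum_congr rfl h, Finset.sum_add_distrib, ← Finset.sum_mul, hp1, one_mul,
      Real.exp_add, Real.exp_log hw, mul_comm]
  · have h0 : (1:ℝ) - γ ≠ 0 := sub_ne_zero.mpr fun h => h1 h.symm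
    have hS : 0 < ∑ n, p n * c n ^ (1 - γ) :=
      sum_wpos p _ hp hp1 fun n => Real.rpow_pos_of_pos (hc n) _
    simp only [boxCoxInv, if_neg h1]
    rw [one_add_sum_boxCox p hp1 γ h1 (fun n => c n * w), one_add_sum_boxCox p hp1 γ h1 c]
    have h2 : ∑ n, p n * (c n * w) ^ (1 - γ) = w ^ (1 - γ) * ∑ n, p n * c n ^ (1 - γ) := by
      rw [Finset.mul_sum]
      refine Finset.sum_congr rfl fun n _ => ?_
      rw [Real.mul_rpow (hc n).le hw.le]; ring
    rw [h2, Real.mul_rpow (Real.rpow_nonneg hw.le _) hS.le, ← Real.rpow_mul hw.le,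
      mul_one_div_cancel h0, Real.rpow_one]

lemma boxCoxInv_sum_mono {N : ℕ} (p : Fin N → ℝ) (hp : ∀ n, 0 ≤ p n) (hp1 : ∑ n, p n = 1)
    (γ : ℝ) (c d : Fin N → ℝ) (hc : ∀ n, 0 < c n) (hd : ∀ n, 0 < d n)
    (h : ∑ n, p n * boxCox γ (c n) ≤ ∑ n, p n * boxCox γ (d n)) :
    boxCoxInv γ (∑ n, p n * boxCox γ (c n)) ≤ boxCoxInv γ (∑ n, p n * boxCox γ (d n)) := by
  by_cases h1 : γ = 1
  · simp only [boxCoxInv, if_pos h1]; exact Real.exp_le_exp.mpr h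
  · have h0 : (1:ℝ) - γ ≠ 0 := sub_ne_zero.mpr fun h => h1 h.symm
    have hSc : 0 < ∑ n, p n * c n ^ (1 - γ) :=
      sum_wpos p _ hp hp1 fun n => Real.rpow_pos_of_pos (hc n) _
    have hSd : 0 < ∑ n, p n * d n ^ (1 - γ) :=
      sum_wpos p _ hp hp1 fun n => Real.rpow_pos_of_pos (hd n) _
    simp only [boxCoxInv, if_neg h1]
    rw [one_add_sum_boxCox p hp1 γ h1 c, one_add_sum_boxCox p hp1 γ h1 d] at *
    rcases lt_or_gt_of_ne h0 with hneg | hpos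
    · -- 1 - γ < 0 : from h, Sd ≤ Sc; exponent 1/(1-γ) ≤ 0
      have hle : ∑ n, p n * d n ^ (1 - γ) ≤ ∑ n, p n * c n ^ (1 - γ) := by
        have := mul_le_mul_of_nonpos_left h (le_of_lt hneg)
        have ec := one_add_sum_boxCox p hp1 γ h1 c
        have ed := one_add_sum_boxCox p hp1 γ h1 d
        linarith
      exact Real.rpow_le_rpow_of_nonpos hSd hle (by
        apply div_nonpos_of_nonneg_of_nonpos <;> linarith)
    · have hle : ∑ n, p n * c n ^ (1 - γ) ≤ ∑ n, p n * d n ^ (1 - γ) := by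
        have := mul_le_mul_of_nonneg_left h (le_of_lt hpos)
        have ec := one_add_sum_boxCox p hp1 γ h1 c
        have ed := one_add_sum_boxCox p hp1 γ h1 d
        linarith
      exact Real.rpow_le_rpow hSc.le hle (by positivity)

/-- Lemma 1 of the paper: solution of the one-step Epstein–Zin
wealth-allocation maximization with linear candidate value function. -/
theorem stmt0 (N : ℕ) (hN : 1 ≤ N)
    (p : Fin N → ℝ) (hp : ∀ n, 0 ≤ p n) (hp1 : ∑ n, p n = 1)
    (a : Fin N → ℝ) (ha : ∀ n, 0 < a n)
    (β : ℝ) (hβ : β ∈ Set.Ioo (0:ℝ) 1)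
    (τC : ℝ) (hτC : 0 ≤ τC)
    (γ : ℝ) (hγ : 0 < γ)
    (s : ℝ) (hs : 0 < s)
    (υ : ℝ) (hυ : υ ∈ Set.Ioo (0:ℝ) 1)
    (R : ℝ) (hR : 0 < R)
    (r : Fin N → ℝ) (hr : ∀ n, -1 < r n)
    (Rn : Fin N → ℝ → ℝ)
    (hRn : ∀ n θ, Rn n θ = (1 / υ) * ((1 + r n) * θ + R * (1 - θ)))
    (g : ℝ → ℝ) (hg : ∀ θ, g θ = ∑ n, p n * boxCox γ (a n * Rn n θ))
    (θstar : ℝ) (hθ1 : θstar ∈ Set.Icc (0:ℝ) 1)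
    (hθmax : ∀ θ ∈ Set.Icc (0:ℝ) 1, g θ ≤ g θstar)
    (κ : ℝ) (hκ : κ = boxCoxInv γ (g θstar)) :
    (∀ c ∈ Set.Ioo 0 (s / (1 + τC)), ∀ θ ∈ Set.Icc (0:ℝ) 1,
      Real.exp ((1 - β) * Real.log c +
        β * Real.log (boxCoxInv γ
          (∑ n, p n * boxCox γ (a n * (Rn n θ * (s - (1 + τC) * c))))))
        ≤ ((1 - β) / (1 + τC)) ^ (1 - β) * (β * κ) ^ β * s) ∧
    Real.exp ((1 - β) * Real.log ((1 - β) * s / (1 + τC)) +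
        β * Real.log (boxCoxInv γ
          (∑ n, p n * boxCox γ (a n * (Rn n θstar *
            (s - (1 + τC) * ((1 - β) * s / (1 + τC))))))))
      = ((1 - β) / (1 + τC)) ^ (1 - β) * (β * κ) ^ β * s := by
  obtain ⟨hβ0, hβ1⟩ := hβ
  have hτ : (0:ℝ) < 1 + τC := by linarith
  have hυ0 := hυ.1
  -- positivity of gross returns
  have hRnpos : ∀ θ ∈ Set.Icc (0:ℝ) 1, ∀ n, 0 < Rn n θ := by
    intro θ hθ n
    obtain ⟨hθa, hθb⟩ := hθ
    rw [hRn]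
    have hrn : (0:ℝ) < 1 + r n := by linarith [hr n]
    have hbase : 0 < (1 + r n) * θ + R * (1 - θ) := by
      rcases lt_or_eq_of_le hθb with h2 | h2
      · have h3 : 0 < R * (1 - θ) := mul_pos hR (by linarith)
        nlinarith [mul_nonneg hrn.le hθa]
      · subst h2; simpa using hrn
    positivity
  have haR : ∀ θ ∈ Set.Icc (0:ℝ) 1, ∀ n, 0 < a n * Rn n θ :=
    fun θ hθ n => mul_pos (ha n) (hRnpos θ hθ n)
  set F : ℝ → ℝ := fun θ => boxCoxInv γ (g θ) with hF
  have hFpos : ∀ θ ∈ Set.Icc (0:ℝ) 1, 0 < F θ := by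
    intro θ hθ
    have := boxCoxInv_sum_pos p hp hp1 γ (fun n => a n * Rn n θ) (haR θ hθ)
    simpa [hF, hg θ] using this
  have hκF : κ = F θstar := hκ
  have hκpos : 0 < κ := hκF ▸ hFpos θstar hθ1
  have hFle : ∀ θ ∈ Set.Icc (0:ℝ) 1, F θ ≤ κ := by
    intro θ hθ
    rw [hκF]
    have := boxCoxInv_sum_mono p hp hp1 γ (fun n => a n * Rn n θ)
      (fun n => a n * Rn n θstar) (haR θ hθ) (haR θstar hθ1)
      (by rw [← hg θ, ← hg θstar]; exact hθmax θ hθ)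
    simpa [hF, hg θ, hg θstar] using this
  have h1β : (0:ℝ) < 1 - β := by linarith
  -- key scaling computation
  have hscale : ∀ θ ∈ Set.Icc (0:ℝ) 1, ∀ w : ℝ, 0 < w →
      boxCoxInv γ (∑ n, p n * boxCox γ (a n * (Rn n θ * w))) = w * F θ := by
    intro θ hθ w hw
    have h : ∀ n, a n * (Rn n θ * w) = (a n * Rn n θ) * w := fun n => by ring
    simp only [h]
    rw [boxCoxInv_sum_scale p hp hp1 γ (fun n => a n * Rn n θ) (haR θ hθ) w hw]
    simp only [hF]
    rw [hg]
  constructor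
  · intro c hc θ hθ
    obtain ⟨hc0, hc1⟩ := hc
    have hw : 0 < s - (1 + τC) * c := by
      have h2 : c * (1 + τC) < s := (lt_div_iff₀ hτ).1 hc1
      nlinarith
    rw [hscale θ hθ _ hw]
    have hFθ := hFpos θ hθ
    have hwF : 0 < (s - (1 + τC) * c) * F θ := mul_pos hw hFθ
    rw [Real.exp_add]
    have e1 : Real.exp ((1 - β) * Real.log c) = c ^ (1 - β) := by
      rw [Real.rpow_def_of_pos hc0, mul_comm]
    have e2 : Real.exp (β * Real.log ((s - (1 + τC) * c) * F θ))
        = ((s - (1 + τC) * c) * F θ) ^ β := by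
      rw [Real.rpow_def_of_pos hwF, mul_comm]
    rw [e1, e2]
    set A := (1 + τC) * c / (1 - β) with hA
    set B := (s - (1 + τC) * c) * F θ / (β * κ) with hB
    have hApos : 0 < A := by positivity
    have hBpos : 0 < B := by positivity
    have hcA : c = (1 - β) / (1 + τC) * A := by
      rw [hA]; field_simp
    have hwFB : (s - (1 + τC) * c) * F θ = (β * κ) * B := by
      rw [hB]; field_simp
    have hAM : A ^ (1 - β) * B ^ β ≤ (1 - β) * A + β * B :=
      Real.geom_mean_le_arith_mean2_weighted h1β.le hβ0.le hApos.le hBpos.le (by ring)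
    have hsum : (1 - β) * A + β * B ≤ s := by
      have e3 : (1 - β) * A = (1 + τC) * c := by rw [hA]; field_simp
      have e4 : β * B = (s - (1 + τC) * c) * F θ / κ := by
        rw [hB]; field_simp
      have e5 : (s - (1 + τC) * c) * F θ / κ ≤ s - (1 + τC) * c := by
        rw [div_le_iff₀ hκpos]
        exact mul_le_mul_of_nonneg_left (hFle θ hθ) hw.le
      rw [e3, e4]; linarith
    calc c ^ (1 - β) * ((s - (1 + τC) * c) * F θ) ^ β
        = ((1 - β) / (1 + τC)) ^ (1 - β) * (β * κ) ^ β * (A ^ (1 - β) * B ^ β) := by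
          rw [hwFB, hcA, Real.mul_rpow (by positivity) hApos.le,
            Real.mul_rpow (by positivity) hBpos.le]
          ring
      _ ≤ ((1 - β) / (1 + τC)) ^ (1 - β) * (β * κ) ^ β * s := by
          have hs' : A ^ (1 - β) * B ^ β ≤ s := le_trans hAM hsum
          exact mul_le_mul_of_nonneg_left hs' (by positivity)
  · have hw' : s - (1 + τC) * ((1 - β) * s / (1 + τC)) = β * s := by
      field_simp; ring
    rw [hw', hscale θstar hθ1 _ (by positivity), ← hκF]
    have hc0 : (0:ℝ) < (1 - β) * s / (1 + τC) := by positivity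
    rw [Real.exp_add]
    have e1 : Real.exp ((1 - β) * Real.log ((1 - β) * s / (1 + τC)))
        = ((1 - β) * s / (1 + τC)) ^ (1 - β) := by
      rw [Real.rpow_def_of_pos hc0, mul_comm]
    have e2 : Real.exp (β * Real.log (β * s * κ)) = (β * s * κ) ^ β := by
      rw [Real.rpow_def_of_pos (by positivity), mul_comm]
    rw [e1, e2]
    have e3 : (1 - β) * s / (1 + τC) = ((1 - β) / (1 + τC)) * s := by ring
    have e4 : β * s * κ = (β * κ) * s := by ring
    rw [e3, e4, Real.mul_rpow (by positivity) hs.le, Real.mul_rpow (by positivity) hs.le]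
    have e5 : s ^ (1 - β) * s ^ β = s := by
      rw [← Real.rpow_add hs]; simp
    calc ((1 - β) / (1 + τC)) ^ (1 - β) * s ^ (1 - β) * ((β * κ) ^ β * s ^ β)
        = ((1 - β) / (1 + τC)) ^ (1 - β) * (β * κ) ^ β * (s ^ (1 - β) * s ^ β) := by ring
      _ = ((1 - β) / (1 + τC)) ^ (1 - β) * (β * κ) ^ β * s := by rw [e5]
end

section
/- Fix an integer N ≥ 1, a row-stochastic N×N matrix Π = (π_{nn'}) (all entries nonnegative, each row summing to one), positive parameters β ∈ (0,1), τ_C ≥ 0, γ > 0, υ ∈ (0,1), R > 0 and r_1,…,r_N > −1. For a ∈ (0,∞)^N and n ∈ {1,…,N} define κ_n(a) = ν_γ^{-1}( max_{θ∈[0,1]} Σ_{n'} π_{nn'} ν_γ(a_{n'} R_{n'}(θ)) ). Then there exists a unique vector a* ∈ (0,∞)^N satisfying a*_n = ((1−β)/(1+τ_C))^{1−β} (β·κ_n(a*))^β for every n ∈ {1,…,N}. -/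
lemma boxCox_mono {γ c d : ℝ} (hc : 0 < c) (hcd : c ≤ d) : boxCox γ c ≤ boxCox γ d := by
  unfold boxCox
  split_ifs with h
  · exact Real.log_le_log hc hcd
  · have he : (1 : ℝ) - γ ≠ 0 := sub_ne_zero.mpr (Ne.symm h)
    rcases he.lt_or_gt with he' | he'
    · have h1 : d ^ (1-γ) ≤ c ^ (1-γ) := Real.rpow_le_rpow_of_nonpos hc hcd he'.le
      rw [div_eq_mul_inv, div_eq_mul_inv]
      exact mul_le_mul_of_nonpos_right (by linarith) (inv_nonpos.mpr he'.le)
    · have h1 : c ^ (1-γ) ≤ d ^ (1-γ) := Real.rpow_le_rpow hc.le hcd he'.le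
      rw [div_eq_mul_inv, div_eq_mul_inv]
      exact mul_le_mul_of_nonneg_right (by linarith) (inv_nonneg.mpr he'.le)

lemma one_add_boxCox {γ c : ℝ} (h : γ ≠ 1) (hc : 0 < c) :
    1 + (1 - γ) * boxCox γ c = c ^ (1 - γ) := by
  have he : (1 : ℝ) - γ ≠ 0 := sub_ne_zero.mpr (Ne.symm h)
  unfold boxCox; rw [if_neg h]; field_simp; ring

lemma boxCox_smul {γ l c : ℝ} (hl : 0 < l) (hc : 0 < c) :
    boxCox γ (l * c) = l ^ (1 - γ) * boxCox γ c + boxCox γ l := by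
  unfold boxCox
  split_ifs with h
  · rw [Real.log_mul hl.ne' hc.ne', h, sub_self, Real.rpow_zero]; ring
  · have he : (1 : ℝ) - γ ≠ 0 := sub_ne_zero.mpr (Ne.symm h)
    rw [Real.mul_rpow hl.le hc.le]
    field_simp
    ring

lemma boxCoxInv_pos {γ y : ℝ} (hy : γ = 1 ∨ 0 < 1 + (1 - γ) * y) : 0 < boxCoxInv γ y := by
  unfold boxCoxInv
  split_ifs with h
  · exact Real.exp_pos y
  · exact Real.rpow_pos_of_pos (hy.resolve_left h) _

lemma boxCoxInv_mono {γ y z : ℝ} (hy : γ = 1 ∨ 0 < 1 + (1 - γ) * y)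
    (hz : γ = 1 ∨ 0 < 1 + (1 - γ) * z) (hyz : y ≤ z) : boxCoxInv γ y ≤ boxCoxInv γ z := by
  unfold boxCoxInv
  split_ifs with h
  · exact Real.exp_le_exp.2 hyz
  · have hy' := hy.resolve_left h
    have hz' := hz.resolve_left h
    have he : (1 : ℝ) - γ ≠ 0 := sub_ne_zero.mpr (Ne.symm h)
    rcases he.lt_or_gt with he' | he'
    · exact Real.rpow_le_rpow_of_nonpos hz' (by nlinarith) (by
        simpa using div_nonpos_of_nonneg_of_nonpos zero_le_one he'.le)
    · exact Real.rpow_le_rpow hy'.le (by nlinarith) (by positivity)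

lemma boxCoxInv_scale {γ l y : ℝ} (h : γ ≠ 1) (hl : 0 < l) (hy : 0 < 1 + (1 - γ) * y) :
    boxCoxInv γ (l ^ (1 - γ) * y + boxCox γ l) = l * boxCoxInv γ y := by
  have he : (1 : ℝ) - γ ≠ 0 := sub_ne_zero.mpr (Ne.symm h)
  have hle := Real.rpow_pos_of_pos hl (1 - γ)
  unfold boxCox boxCoxInv
  rw [if_neg h, if_neg h, if_neg h]
  have h1 : 1 + (1 - γ) * (l ^ (1 - γ) * y + (l ^ (1 - γ) - 1) / (1 - γ))
      = l ^ (1 - γ) * (1 + (1 - γ) * y) := by field_simp; ring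
  rw [h1, Real.mul_rpow hle.le hy.le, ← Real.rpow_mul hl.le, mul_one_div_cancel he,
    Real.rpow_one]

lemma boxCoxInv_scale_one {l y : ℝ} (hl : 0 < l) :
    boxCoxInv 1 (y + Real.log l) = l * boxCoxInv 1 y := by
  unfold boxCoxInv
  rw [if_pos rfl, if_pos rfl, Real.exp_add, Real.exp_log hl, mul_comm]

/-- core of Proposition 1: there is a unique positive vector `a*` solving
the nonlinear system `a*_n = ((1−β)/(1+τ_C))^{1−β}(β κ_n(a*))^β`, where
`κ_n(a) = ν_γ⁻¹(max_{θ∈[0,1]} Σ_{n'} π_{nn'} ν_γ(a_{n'} R_{n'}(θ)))`. -/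
theorem stmt6 (N : ℕ) (hN : 1 ≤ N)
    (P : Fin N → Fin N → ℝ) (hP : ∀ n n', 0 ≤ P n n') (hP1 : ∀ n, ∑ n', P n n' = 1)
    (β : ℝ) (hβ : β ∈ Set.Ioo (0:ℝ) 1)
    (τC : ℝ) (hτC : 0 ≤ τC)
    (γ : ℝ) (hγ : 0 < γ)
    (υ : ℝ) (hυ : υ ∈ Set.Ioo (0:ℝ) 1)
    (R : ℝ) (hR : 0 < R)
    (r : Fin N → ℝ) (hr : ∀ n, -1 < r n)
    (Rn : Fin N → ℝ → ℝ)
    (hRn : ∀ n θ, Rn n θ = (1 / υ) * ((1 + r n) * θ + R * (1 - θ)))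
    (κ : Fin N → (Fin N → ℝ) → ℝ)
    (hκ : ∀ n a, κ n a = boxCoxInv γ
      (sSup ((fun θ => ∑ n', P n n' * boxCox γ (a n' * Rn n' θ)) '' Set.Icc (0:ℝ) 1))) :
    ∃! a : Fin N → ℝ, (∀ n, 0 < a n) ∧
      ∀ n, a n = ((1 - β) / (1 + τC)) ^ (1 - β) * (β * κ n a) ^ β := by
  obtain ⟨hβ0, hβ1⟩ := hβ
  obtain ⟨hυ0, hυ1⟩ := hυ
  haveI : Nonempty (Fin N) := Fin.pos_iff_nonempty.mp hN
  -- bounds on Rn over [0,1]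
  have hRnb : ∀ n, ∀ θ ∈ Set.Icc (0:ℝ) 1,
      0 < Rn n θ ∧ Rn n θ ≤ (1/υ) * max (1 + r n) R := by
    rintro n θ ⟨hθ0, hθ1⟩
    have h1 : 0 < 1 + r n := by linarith [hr n]
    have hυ' : 0 < 1/υ := by positivity
    rw [hRn]
    constructor
    · refine mul_pos hυ' ?_
      rcases eq_or_lt_of_le hθ0 with h | h
      · rw [← h]; nlinarith
      · nlinarith [mul_pos h1 h, mul_nonneg hR.le (sub_nonneg.mpr hθ1)]
    · have hin : (1 + r n) * θ + R * (1 - θ) ≤ max (1 + r n) R := by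
        nlinarith [le_max_left (1 + r n) R, le_max_right (1 + r n) R]
      exact mul_le_mul_of_nonneg_left hin hυ'.le
  -- positivity of stochastic averages
  have hsum_pos : ∀ n (t : Fin N → ℝ), (∀ i, 0 < t i) → 0 < ∑ n', P n n' * t n' := by
    intro n t ht
    have hex : ∃ n₀, 0 < P n n₀ := by
      by_contra hc; push_neg at hc
      have h0 : ∑ n', P n n' ≤ 0 := Finset.sum_nonpos fun i _ => hc i
      rw [hP1 n] at h0; linarith
    obtain ⟨n₀, hn₀⟩ := hex
    exact Finset.sum_pos' (fun i _ => mul_nonneg (hP n i) (ht i).le)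
      ⟨n₀, Finset.mem_univ _, mul_pos hn₀ (ht n₀)⟩
  have hform : ∀ n (c : Fin N → ℝ), γ ≠ 1 → (∀ i, 0 < c i) →
      1 + (1 - γ) * ∑ n', P n n' * boxCox γ (c n') = ∑ n', P n n' * (c n') ^ (1 - γ) := by
    intro n c h hc
    have h1 : ∑ n', P n n' * (c n') ^ (1 - γ)
        = ∑ n', (P n n' + (1 - γ) * (P n n' * boxCox γ (c n'))) :=
      Finset.sum_congr rfl fun i _ => by rw [← one_add_boxCox h (hc i)]; ring
    rw [h1, Finset.sum_add_distrib, hP1 n, ← Finset.mul_sum]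
  -- well-formedness of the sSup for positive a
  have hdom : ∀ (a : Fin N → ℝ), (∀ i, 0 < a i) → ∀ n,
      ((fun θ => ∑ n', P n n' * boxCox γ (a n' * Rn n' θ)) '' Set.Icc (0:ℝ) 1).Nonempty ∧
      BddAbove ((fun θ => ∑ n', P n n' * boxCox γ (a n' * Rn n' θ)) '' Set.Icc (0:ℝ) 1) ∧
      (γ = 1 ∨ 0 < 1 + (1 - γ) *
        sSup ((fun θ => ∑ n', P n n' * boxCox γ (a n' * Rn n' θ)) '' Set.Icc (0:ℝ) 1)) := by
    intro a ha n
    have h0mem : (0:ℝ) ∈ Set.Icc (0:ℝ) 1 := by constructor <;> norm_num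
    have hnon : ((fun θ => ∑ n', P n n' * boxCox γ (a n' * Rn n' θ)) '' Set.Icc (0:ℝ) 1).Nonempty :=
      ⟨_, ⟨0, h0mem, rfl⟩⟩
    have hbd : ∀ y ∈ (fun θ => ∑ n', P n n' * boxCox γ (a n' * Rn n' θ)) '' Set.Icc (0:ℝ) 1,
        y ≤ ∑ n', P n n' * boxCox γ (a n' * ((1/υ) * max (1 + r n') R)) := by
      rintro y ⟨θ, hθ, rfl⟩
      refine Finset.sum_le_sum fun i _ => mul_le_mul_of_nonneg_left ?_ (hP n i)
      exact boxCox_mono (mul_pos (ha i) (hRnb i θ hθ).1)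
        (mul_le_mul_of_nonneg_left (hRnb i θ hθ).2 (ha i).le)
    have hbdd : BddAbove ((fun θ => ∑ n', P n n' * boxCox γ (a n' * Rn n' θ)) '' Set.Icc (0:ℝ) 1) :=
      ⟨_, hbd⟩
    refine ⟨hnon, hbdd, ?_⟩
    by_cases h : γ = 1
    · exact Or.inl h
    right
    have he : (1 : ℝ) - γ ≠ 0 := sub_ne_zero.mpr (Ne.symm h)
    rcases he.lt_or_gt with he' | he'
    · -- γ > 1 : use the upper bound
      have hBpos : 0 < 1 + (1 - γ) *
          ∑ n', P n n' * boxCox γ (a n' * ((1/υ) * max (1 + r n') R)) := by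
        rw [hform n _ h (fun i => mul_pos (ha i) (by positivity))]
        exact hsum_pos n _ fun i => Real.rpow_pos_of_pos (mul_pos (ha i) (by positivity)) _
      have hSle := csSup_le hnon hbd
      nlinarith
    · -- γ < 1 : use the element at θ = 0
      have hgpos : 0 < 1 + (1 - γ) * ∑ n', P n n' * boxCox γ (a n' * Rn n' 0) := by
        rw [hform n _ h (fun i => mul_pos (ha i) (hRnb i 0 h0mem).1)]
        exact hsum_pos n _ fun i =>
          Real.rpow_pos_of_pos (mul_pos (ha i) (hRnb i 0 h0mem).1) _
      have hSge := le_csSup hbdd (⟨0, h0mem, rfl⟩ :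
        (∑ n', P n n' * boxCox γ (a n' * Rn n' 0)) ∈
          (fun θ => ∑ n', P n n' * boxCox γ (a n' * Rn n' θ)) '' Set.Icc (0:ℝ) 1)
      nlinarith
  -- positivity of κ
  have hκpos : ∀ (a : Fin N → ℝ), (∀ i, 0 < a i) → ∀ n, 0 < κ n a := by
    intro a ha n
    rw [hκ]
    exact boxCoxInv_pos (hdom a ha n).2.2
  -- monotonicity of κ
  have hκmono : ∀ (a b : Fin N → ℝ), (∀ i, 0 < a i) → (∀ i, a i ≤ b i) → ∀ n,
      κ n a ≤ κ n b := by
    intro a b ha hab n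
    have hb : ∀ i, 0 < b i := fun i => lt_of_lt_of_le (ha i) (hab i)
    rw [hκ, hκ]
    refine boxCoxInv_mono (hdom a ha n).2.2 (hdom b hb n).2.2 ?_
    refine csSup_le (hdom a ha n).1 ?_
    rintro y ⟨θ, hθ, rfl⟩
    calc (∑ n', P n n' * boxCox γ (a n' * Rn n' θ))
        ≤ ∑ n', P n n' * boxCox γ (b n' * Rn n' θ) := by
          refine Finset.sum_le_sum fun i _ => mul_le_mul_of_nonneg_left ?_ (hP n i)
          exact boxCox_mono (mul_pos (ha i) (hRnb i θ hθ).1)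
            (mul_le_mul_of_nonneg_right (hab i) (hRnb i θ hθ).1.le)
      _ ≤ _ := le_csSup (hdom b hb n).2.1 ⟨θ, hθ, rfl⟩
  -- homogeneity of κ
  have hκscale : ∀ (a : Fin N → ℝ), (∀ i, 0 < a i) → ∀ (l : ℝ), 0 < l → ∀ n,
      κ n (fun i => l * a i) = l * κ n a := by
    intro a ha l hl n
    rw [hκ, hκ]
    have himg : (fun θ => ∑ n', P n n' * boxCox γ ((fun i => l * a i) n' * Rn n' θ)) ''
        Set.Icc (0:ℝ) 1
        = (fun y => l ^ (1 - γ) * y + boxCox γ l) ''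
          ((fun θ => ∑ n', P n n' * boxCox γ (a n' * Rn n' θ)) '' Set.Icc (0:ℝ) 1) := by
      rw [← Set.image_comp]
      refine Set.image_congr fun θ hθ => ?_
      simp only [Function.comp_apply]
      have hterm : ∀ i ∈ Finset.univ, P n i * boxCox γ (l * a i * Rn i θ)
          = l ^ (1 - γ) * (P n i * boxCox γ (a i * Rn i θ)) + P n i * boxCox γ l := by
        intro i _
        rw [mul_assoc, boxCox_smul hl (mul_pos (ha i) (hRnb i θ hθ).1)]
        ring
      rw [Finset.sum_congr rfl hterm, Finset.sum_add_distrib, ← Finset.mul_sum,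
        ← Finset.sum_mul, hP1 n, one_mul]
    have hmono : Monotone (fun y : ℝ => l ^ (1 - γ) * y + boxCox γ l) := by
      intro y z hyz
      have := Real.rpow_pos_of_pos hl (1 - γ)
      dsimp only
      nlinarith
    have hcont : ContinuousAt (fun y : ℝ => l ^ (1 - γ) * y + boxCox γ l)
        (sSup ((fun θ => ∑ n', P n n' * boxCox γ (a n' * Rn n' θ)) '' Set.Icc (0:ℝ) 1)) :=
      ((continuous_const.mul continuous_id).add continuous_const).continuousAt
    rw [himg, ← Monotone.map_csSup_of_continuousAt hcont hmono (hdom a ha n).1 (hdom a ha n).2.1]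
    by_cases h : γ = 1
    · subst h
      have : boxCox 1 l = Real.log l := by unfold boxCox; rw [if_pos rfl]
      rw [this, sub_self, Real.rpow_zero, one_mul]
      exact boxCoxInv_scale_one hl
    · exact boxCoxInv_scale h hl ((hdom a ha n).2.2.resolve_left h)
  -- the contraction in log coordinates
  have hCst : (0:ℝ) < ((1 - β) / (1 + τC)) ^ (1 - β) :=
    Real.rpow_pos_of_pos (div_pos (by linarith) (by linarith)) _
  set Cst : ℝ := ((1 - β) / (1 + τC)) ^ (1 - β) with hCst_def
  set F : (Fin N → ℝ) → (Fin N → ℝ) :=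
    fun x n => Real.log Cst + β * Real.log (β * κ n (fun i => Real.exp (x i))) with hF_def
  have hhalf : ∀ x y : Fin N → ℝ, ∀ n, F x n - F y n ≤ β * dist x y := by
    intro x y n
    have hd : ∀ i, Real.exp (x i) ≤ Real.exp (dist x y) * Real.exp (y i) := by
      intro i
      rw [← Real.exp_add]
      refine Real.exp_le_exp.2 ?_
      have h1 : dist (x i) (y i) ≤ dist x y := dist_le_pi_dist x y i
      have h2 : x i - y i ≤ |x i - y i| := le_abs_self _
      rw [Real.dist_eq] at h1
      linarith
    have hey : ∀ i, (0:ℝ) < Real.exp (y i) := fun i => Real.exp_pos _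
    have hex : ∀ i, (0:ℝ) < Real.exp (x i) := fun i => Real.exp_pos _
    have hκle : κ n (fun i => Real.exp (x i)) ≤
        Real.exp (dist x y) * κ n (fun i => Real.exp (y i)) := by
      calc κ n (fun i => Real.exp (x i))
          ≤ κ n (fun i => Real.exp (dist x y) * Real.exp (y i)) := hκmono _ _ hex hd n
        _ = Real.exp (dist x y) * κ n (fun i => Real.exp (y i)) :=
          hκscale _ hey _ (Real.exp_pos _) n
    have hκx : 0 < κ n (fun i => Real.exp (x i)) := hκpos _ hex n
    have hκy : 0 < κ n (fun i => Real.exp (y i)) := hκpos _ hey n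
    have hlog : Real.log (β * κ n (fun i => Real.exp (x i)))
        ≤ dist x y + Real.log (β * κ n (fun i => Real.exp (y i))) := by
      have h1 : Real.log (β * κ n (fun i => Real.exp (x i)))
          ≤ Real.log (Real.exp (dist x y) * (β * κ n (fun i => Real.exp (y i)))) := by
        apply Real.log_le_log (by positivity)
        calc β * κ n (fun i => Real.exp (x i))
            ≤ β * (Real.exp (dist x y) * κ n (fun i => Real.exp (y i))) := by
              exact mul_le_mul_of_nonneg_left hκle hβ0.le
          _ = Real.exp (dist x y) * (β * κ n (fun i => Real.exp (y i))) := by ring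
      rwa [Real.log_mul (Real.exp_ne_zero _) (by positivity), Real.log_exp] at h1
    simp only [hF_def]
    nlinarith [hlog]
  have hK1 : (⟨β, hβ0.le⟩ : NNReal) < 1 := by
    refine NNReal.coe_lt_coe.mp ?_
    exact_mod_cast hβ1
  have hlip : LipschitzWith ⟨β, hβ0.le⟩ F := by
    apply LipschitzWith.of_dist_le_mul
    intro x y
    have hβd : (0:ℝ) ≤ β * dist x y := mul_nonneg hβ0.le dist_nonneg
    show dist (F x) (F y) ≤ β * dist x y
    rw [dist_pi_le_iff hβd]
    intro n
    rw [Real.dist_eq, abs_le]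
    constructor
    · have := hhalf y x n
      rw [dist_comm] at this
      linarith
    · linarith [hhalf x y n]
  have hcontr : ContractingWith ⟨β, hβ0.le⟩ F := ⟨hK1, hlip⟩
  -- the fixed point
  set x₀ : Fin N → ℝ := ContractingWith.fixedPoint F hcontr with hx₀_def
  have hfix : F x₀ = x₀ := ContractingWith.fixedPoint_isFixedPt hcontr
  refine ⟨fun i => Real.exp (x₀ i), ⟨fun n => Real.exp_pos _, ?_⟩, ?_⟩
  · intro n
    have hκ0 : 0 < β * κ n (fun i => Real.exp (x₀ i)) :=
      mul_pos hβ0 (hκpos _ (fun i => Real.exp_pos _) n)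
    have h1 : Real.exp (x₀ n) = Real.exp (F x₀ n) := by rw [hfix]
    show Real.exp (x₀ n) = _
    rw [h1]
    simp only [hF_def]
    rw [Real.exp_add, Real.exp_log hCst, Real.rpow_def_of_pos hκ0, mul_comm (Real.log _) β]
  · rintro b ⟨hb, heq⟩
    have hxb : F (fun i => Real.log (b i)) = fun i => Real.log (b i) := by
      funext n
      have hexp : (fun i => Real.exp (Real.log (b i))) = b := by
        funext i; exact Real.exp_log (hb i)
      simp only [hF_def, hexp]
      have hκb : 0 < β * κ n b := mul_pos hβ0 (hκpos _ hb n)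
      rw [show Real.log (b n) = Real.log (Cst * (β * κ n b) ^ β) by rw [← heq n]]
      rw [Real.log_mul hCst.ne' (by positivity), Real.log_rpow hκb]
    have hxeq : (fun i => Real.log (b i)) = x₀ :=
      ContractingWith.fixedPoint_unique hcontr hxb
    funext i
    have := congrFun hxeq i
    calc b i = Real.exp (Real.log (b i)) := (Real.exp_log (hb i)).symm
      _ = Real.exp (x₀ i) := by rw [this]
end

section
/- Fix an integer N ≥ 1, a row-stochastic N×N matrix Π = (π_{nn'}), parameters β ∈ (0,1), τ_C ≥ 0, γ > 0, υ ∈ (0,1), R > 0 and r_1,…,r_N > −1. Let 𝒱 be the class of functions V : (0,∞) × {1,…,N} → ℝ such that 0 < inf_{s,n} V_n(s)/s ≤ sup_{s,n} V_n(s)/s < ∞. Define the Bellman operator T̃ on 𝒱 by (T̃V)_n(s) = sup over c ∈ (0, s/(1+τ_C)) and θ ∈ [0,1] of exp((1−β)·log c + β·log ν_γ^{-1}(Σ_{n'} π_{nn'} ν_γ(V_{n'}(R_{n'}(θ)(s−(1+τ_C)c))))). Then: (i) T̃ maps 𝒱 into 𝒱; (ii) V*_n(s) = a*_n s, with a* the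 unique solution of the system a_n = ((1−β)/(1+τ_C))^{1−β}(β·κ_n(a))^β where κ_n(a) = ν_γ^{-1}(max_{θ∈[0,1]} Σ_{n'} π_{nn'} ν_γ(a_{n'}R_{n'}(θ))), satisfies T̃V* = V*; and (iii) V* is the unique fixed point of T̃ in 𝒱. -/
lemma boxCox_mono_s7 (γ : ℝ) {a b : ℝ} (ha : 0 < a) (hab : a ≤ b) :
    boxCox γ a ≤ boxCox γ b := by
  unfold boxCox
  split_ifs with h
  · exact Real.log_le_log ha hab
  · rcases lt_or_gt_of_ne (sub_ne_zero.mpr (Ne.symm h)) with he | he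
    · have h2 : b ^ (1-γ) ≤ a ^ (1-γ) := Real.rpow_le_rpow_of_nonpos ha hab he.le
      rw [div_le_div_right_of_neg he]
      linarith
    · have h2 : a ^ (1-γ) ≤ b ^ (1-γ) := Real.rpow_le_rpow ha.le hab he.le
      gcongr

lemma boxCoxInv_boxCox (γ : ℝ) {c : ℝ} (hc : 0 < c) : boxCoxInv γ (boxCox γ c) = c := by
  unfold boxCox boxCoxInv
  split_ifs with h
  · exact Real.exp_log hc
  · have he : (1:ℝ) - γ ≠ 0 := sub_ne_zero.mpr (Ne.symm h)
    have : 1 + (1 - γ) * ((c ^ (1-γ) - 1) / (1 - γ)) = c ^ (1-γ) := by field_simp; ring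
    rw [this, one_div, Real.rpow_rpow_inv hc.le he]

section G
variable {N : ℕ} {γ : ℝ} {p : Fin N → ℝ}

lemma sum_boxCox_identity (h1 : γ ≠ 1) (hp1 : ∑ i, p i = 1) (x : Fin N → ℝ) :
    1 + (1 - γ) * ∑ i, p i * boxCox γ (x i) = ∑ i, p i * (x i) ^ (1 - γ) := by
  have he : (1:ℝ) - γ ≠ 0 := sub_ne_zero.mpr (Ne.symm h1)
  have h2 : ∀ i, p i * boxCox γ (x i) = (p i * (x i)^(1-γ) - p i)/(1-γ) := by
    intro i; unfold boxCox; rw [if_neg h1]; field_simp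
  rw [Finset.sum_congr rfl (fun i _ => h2 i), ← Finset.sum_div, Finset.sum_sub_distrib, hp1]
  field_simp
  ring

lemma sum_weight_pos (hp : ∀ i, 0 ≤ p i) (hp1 : ∑ i, p i = 1) {t : Fin N → ℝ}
    (ht : ∀ i, 0 < t i) : 0 < ∑ i, p i * t i := by
  have hne : ∃ i ∈ Finset.univ, p i ≠ 0 := by
    apply Finset.exists_ne_zero_of_sum_ne_zero; rw [hp1]; norm_num
  obtain ⟨i0, _, hi0⟩ := hne
  refine Finset.sum_pos' (fun i _ => mul_nonneg (hp i) (ht i).le) ⟨i0, Finset.mem_univ i0, ?_⟩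
  exact mul_pos ((hp i0).lt_of_ne (Ne.symm hi0)) (ht i0)

lemma G_le_G (hp : ∀ i, 0 ≤ p i) (hp1 : ∑ i, p i = 1) {x y : Fin N → ℝ}
    (hx : ∀ i, 0 < x i) (hy : ∀ i, 0 < y i)
    (hxy : ∑ i, p i * boxCox γ (x i) ≤ ∑ i, p i * boxCox γ (y i)) :
    boxCoxInv γ (∑ i, p i * boxCox γ (x i)) ≤ boxCoxInv γ (∑ i, p i * boxCox γ (y i)) := by
  unfold boxCoxInv
  split_ifs with h
  · exact Real.exp_le_exp.mpr hxy
  · have hBx : 0 < ∑ i, p i * (x i) ^ (1-γ) :=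
      sum_weight_pos hp hp1 (fun i => Real.rpow_pos_of_pos (hx i) _)
    have hBy : 0 < ∑ i, p i * (y i) ^ (1-γ) :=
      sum_weight_pos hp hp1 (fun i => Real.rpow_pos_of_pos (hy i) _)
    have hix := sum_boxCox_identity h hp1 x
    have hiy := sum_boxCox_identity h hp1 y
    rcases lt_or_gt_of_ne (sub_ne_zero.mpr (Ne.symm h)) with he | he
    · have hBle : ∑ i, p i * (y i) ^ (1-γ) ≤ ∑ i, p i * (x i) ^ (1-γ) := by nlinarith
      have : 1 + (1-γ) * ∑ i, p i * boxCox γ (y i) ≤ 1 + (1-γ) * ∑ i, p i * boxCox γ (x i) := by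
        rw [hix, hiy]; exact hBle
      exact Real.rpow_le_rpow_of_nonpos (by rw [hiy]; exact hBy) this
        (le_of_lt (div_neg_of_pos_of_neg one_pos he))
    · have hBle : ∑ i, p i * (x i) ^ (1-γ) ≤ ∑ i, p i * (y i) ^ (1-γ) := by nlinarith
      refine Real.rpow_le_rpow (by rw [hix]; exact hBx.le) ?_ (by positivity)
      rw [hix, hiy]; exact hBle

lemma G_const (hp1 : ∑ i, p i = 1) {c : ℝ} (hc : 0 < c) :
    boxCoxInv γ (∑ i, p i * boxCox γ c) = c := by
  rw [← Finset.sum_mul, hp1, one_mul, boxCoxInv_boxCox γ hc]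

lemma G_pos (hp : ∀ i, 0 ≤ p i) (hp1 : ∑ i, p i = 1) {x : Fin N → ℝ}
    (hx : ∀ i, 0 < x i) : 0 < boxCoxInv γ (∑ i, p i * boxCox γ (x i)) := by
  unfold boxCoxInv
  split_ifs with h
  · exact Real.exp_pos _
  · rw [sum_boxCox_identity h hp1 x]
    exact Real.rpow_pos_of_pos (sum_weight_pos hp hp1
      (fun i => Real.rpow_pos_of_pos (hx i) _)) _

lemma G_hom (hp : ∀ i, 0 ≤ p i) (hp1 : ∑ i, p i = 1) {x : Fin N → ℝ}
    (hx : ∀ i, 0 < x i) {c : ℝ} (hc : 0 < c) :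
    boxCoxInv γ (∑ i, p i * boxCox γ (c * x i)) =
      c * boxCoxInv γ (∑ i, p i * boxCox γ (x i)) := by
  unfold boxCoxInv
  split_ifs with h
  · have : ∀ i, p i * boxCox γ (c * x i) = p i * Real.log c + p i * boxCox γ (x i) := by
      intro i; unfold boxCox; rw [if_pos h, if_pos h, Real.log_mul hc.ne' (hx i).ne']; ring
    rw [Finset.sum_congr rfl (fun i _ => this i), Finset.sum_add_distrib, ← Finset.sum_mul,
      hp1, one_mul, Real.exp_add, Real.exp_log hc]
  · have he : (1:ℝ) - γ ≠ 0 := sub_ne_zero.mpr (Ne.symm h)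
    have h1 : 1 + (1-γ) * ∑ i, p i * boxCox γ (c * x i) =
        c ^ (1-γ) * (1 + (1-γ) * ∑ i, p i * boxCox γ (x i)) := by
      rw [sum_boxCox_identity h hp1, sum_boxCox_identity h hp1, Finset.mul_sum]
      refine Finset.sum_congr rfl (fun i _ => ?_)
      rw [Real.mul_rpow hc.le (hx i).le]; ring
    have hBx : (0:ℝ) < 1 + (1-γ) * ∑ i, p i * boxCox γ (x i) := by
      rw [sum_boxCox_identity h hp1]
      exact sum_weight_pos hp hp1 (fun i => Real.rpow_pos_of_pos (hx i) _)
    rw [h1, Real.mul_rpow (by positivity) hBx.le, one_div,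
      Real.rpow_rpow_inv hc.le he]

end G

lemma exp_combo {β c K : ℝ} (hc : 0 < c) (hK : 0 < K) :
    Real.exp ((1-β) * Real.log c + β * Real.log K) = c ^ (1-β) * K ^ β := by
  rw [Real.exp_add, Real.rpow_def_of_pos hc, Real.rpow_def_of_pos hK,
    mul_comm (Real.log c), mul_comm (Real.log K)]

lemma amgm {β q s c : ℝ} (hβ0 : 0 < β) (hβ1 : β < 1) (hq : 0 < q) (hc : 0 < c)
    (hcs : c < s / q) :
    c ^ (1-β) * (s - q*c) ^ β ≤ ((1-β)/q) ^ (1-β) * β ^ β * s := by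
  have hw : 0 < s - q * c := by
    have := (lt_div_iff₀ hq).mp hcs; nlinarith
  have h1β : (0:ℝ) < 1 - β := by linarith
  have key := Real.geom_mean_le_arith_mean2_weighted h1β.le hβ0.le
    (p₁ := q * c / (1-β)) (p₂ := (s - q*c)/β) (by positivity) (by positivity) (by ring)
  have hsum : (1-β) * (q * c / (1-β)) + β * ((s - q*c)/β) = s := by field_simp; ring
  rw [hsum] at key
  have hc' : c = (1-β)/q * (q * c / (1-β)) := by field_simp
  have hw' : s - q*c = β * ((s - q*c)/β) := by field_simp
  calc c ^ (1-β) * (s - q*c) ^ β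
      = ((1-β)/q) ^ (1-β) * β ^ β * ((q * c / (1-β)) ^ (1-β) * ((s - q*c)/β) ^ β) := by
        nth_rewrite 1 [hc']; nth_rewrite 1 [hw']
        rw [Real.mul_rpow (by positivity) (by positivity),
          Real.mul_rpow (by positivity) (by positivity)]
        ring
    _ ≤ ((1-β)/q) ^ (1-β) * β ^ β * s := by
        exact mul_le_mul_of_nonneg_left key (by positivity)

lemma boxCox_continuousOn (γ : ℝ) : ContinuousOn (boxCox γ) (Set.Ioi 0) := by
  unfold boxCox
  split_ifs with h
  · exact Real.continuousOn_log.mono (fun x hx => ne_of_gt hx)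
  · apply ContinuousOn.div_const
    apply ContinuousOn.sub _ continuousOn_const
    intro x hx
    exact (Real.continuousAt_rpow_const x _ (Or.inl (ne_of_gt hx))).continuousWithinAt

lemma rpow_combo {s A B β : ℝ} (hs : 0 < s) (hA : 0 ≤ A) (hB : 0 ≤ B) :
    (A*s) ^ (1-β) * ((B*s) ^ β) = A^(1-β) * B^β * s := by
  rw [Real.mul_rpow hA hs.le, Real.mul_rpow hB hs.le,
    show A^(1-β)*s^(1-β)*(B^β*s^β) = A^(1-β)*B^β*(s^(1-β)*s^β) by ring,
    ← Real.rpow_add hs]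
  norm_num

/-- Propositions 1 and 6 of the paper: the Bellman operator `T̃` of the
Epstein–Zin wealth-allocation problem maps the class `𝒱` (functions bounded above and
below by positive linear functions of wealth) into itself, the linear value function
`V*_n(s) = a*_n s` is a fixed point, and it is the unique fixed point in `𝒱`. -/
theorem stmt7 (N : ℕ) (hN : 1 ≤ N)
    (P : Fin N → Fin N → ℝ) (hP : ∀ n n', 0 ≤ P n n') (hP1 : ∀ n, ∑ n', P n n' = 1)
    (β : ℝ) (hβ : β ∈ Set.Ioo (0:ℝ) 1)
    (τC : ℝ) (hτC : 0 ≤ τC)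
    (γ : ℝ) (hγ : 0 < γ)
    (υ : ℝ) (hυ : υ ∈ Set.Ioo (0:ℝ) 1)
    (R : ℝ) (hR : 0 < R)
    (r : Fin N → ℝ) (hr : ∀ n, -1 < r n)
    (Rn : Fin N → ℝ → ℝ)
    (hRn : ∀ n θ, Rn n θ = (1 / υ) * ((1 + r n) * θ + R * (1 - θ)))
    (InV : (ℝ → Fin N → ℝ) → Prop)
    (hInV : ∀ V, InV V ↔ ∃ lo hi : ℝ, 0 < lo ∧
      ∀ s : ℝ, 0 < s → ∀ n, lo * s ≤ V s n ∧ V s n ≤ hi * s)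
    (Tb : (ℝ → Fin N → ℝ) → (ℝ → Fin N → ℝ))
    (hTb : ∀ V s n, Tb V s n = sSup {u : ℝ |
      ∃ c ∈ Set.Ioo 0 (s / (1 + τC)), ∃ θ ∈ Set.Icc (0:ℝ) 1,
        u = Real.exp ((1 - β) * Real.log c + β * Real.log (boxCoxInv γ
          (∑ n', P n n' * boxCox γ (V (Rn n' θ * (s - (1 + τC) * c)) n'))))})
    (κ : Fin N → (Fin N → ℝ) → ℝ)
    (hκ : ∀ n a, κ n a = boxCoxInv γ
      (sSup ((fun θ => ∑ n', P n n' * boxCox γ (a n' * Rn n' θ)) '' Set.Icc (0:ℝ) 1)))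
    (astar : Fin N → ℝ) (hastar_pos : ∀ n, 0 < astar n)
    (hastar_eq : ∀ n, astar n = ((1 - β) / (1 + τC)) ^ (1 - β) * (β * κ n astar) ^ β)
    (hastar_unique : ∀ a : Fin N → ℝ, (∀ n, 0 < a n) →
      (∀ n, a n = ((1 - β) / (1 + τC)) ^ (1 - β) * (β * κ n a) ^ β) → a = astar) :
    (∀ V, InV V → InV (Tb V)) ∧
    (∀ s : ℝ, 0 < s → ∀ n, Tb (fun s' n' => astar n' * s') s n = astar n * s) ∧
    (∀ V, InV V → (∀ s : ℝ, 0 < s → ∀ n, Tb V s n = V s n) →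
      ∀ s : ℝ, 0 < s → ∀ n, V s n = astar n * s) := by
  obtain ⟨hβ0, hβ1⟩ := hβ
  obtain ⟨hυ0, hυ1⟩ := hυ
  have h1β : (0:ℝ) < 1 - β := by linarith
  have hq : (0:ℝ) < 1 + τC := by linarith
  haveI hNe : Nonempty (Fin N) := ⟨⟨0, hN⟩⟩
  have hrp : ∀ n', (0:ℝ) < 1 + r n' := fun n' => by linarith [hr n']
  -- positivity and bounds for Rn on [0,1]
  set m : ℝ := (1/υ) * (Finset.univ.inf' Finset.univ_nonempty (fun n' => min (1 + r n') R))
    with hm_def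
  set M : ℝ := (1/υ) * (R + ∑ n', (1 + r n')) with hM_def
  have hm0 : 0 < m := by
    apply mul_pos (by positivity)
    rw [Finset.lt_inf'_iff]
    exact fun i _ => lt_min (hrp i) hR
  have hmle : ∀ n' θ, θ ∈ Set.Icc (0:ℝ) 1 → m ≤ Rn n' θ := by
    intro n' θ ⟨h0, h1⟩
    rw [hRn]
    have hi : Finset.univ.inf' Finset.univ_nonempty (fun n' => min (1 + r n') R)
        ≤ min (1 + r n') R := Finset.inf'_le _ (Finset.mem_univ n')
    have e1 : min (1 + r n') R * θ ≤ (1 + r n') * θ :=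
      mul_le_mul_of_nonneg_right (min_le_left _ _) h0
    have e2 : min (1 + r n') R * (1 - θ) ≤ R * (1 - θ) :=
      mul_le_mul_of_nonneg_right (min_le_right _ _) (by linarith)
    rw [hm_def]
    have : min (1 + r n') R ≤ (1 + r n') * θ + R * (1 - θ) := by nlinarith
    have h1υ : (0:ℝ) < 1/υ := by positivity
    nlinarith
  have hRposI : ∀ n' θ, θ ∈ Set.Icc (0:ℝ) 1 → 0 < Rn n' θ :=
    fun n' θ hθ => lt_of_lt_of_le hm0 (hmle n' θ hθ)
  have hMle : ∀ n' θ, θ ∈ Set.Icc (0:ℝ) 1 → Rn n' θ ≤ M := by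
    intro n' θ ⟨h0, h1⟩
    rw [hRn, hM_def]
    have hsum : (1 + r n') ≤ ∑ i, (1 + r i) :=
      Finset.single_le_sum (f := fun i => 1 + r i) (fun i _ => (hrp i).le) (Finset.mem_univ n')
    have e1 : (1 + r n') * θ ≤ (1 + r n') := mul_le_of_le_one_right (hrp n').le h1
    have e2 : R * (1 - θ) ≤ R := mul_le_of_le_one_right hR.le (by linarith)
    have h1υ : (0:ℝ) < 1/υ := by positivity
    nlinarith
  have hmM : m ≤ M := le_trans (hmle ⟨0,hN⟩ 0 (by norm_num))
    (hMle ⟨0,hN⟩ 0 (by norm_num))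
  have hM0 : 0 < M := lt_of_lt_of_le hm0 hmM
  -- the wealth after consumption is positive
  have hwpos : ∀ s c : ℝ, c ∈ Set.Ioo 0 (s / (1 + τC)) → 0 < s - (1 + τC) * c := by
    intro s c ⟨hc0, hc1⟩
    have := (lt_div_iff₀ hq).mp hc1
    nlinarith
  set C1 : ℝ := (1-β)/(1+τC) with hC1_def
  have hC10 : 0 < C1 := div_pos h1β hq
  -- upper bound on each element of the Bellman supremum set
  have helem : ∀ (V : ℝ → Fin N → ℝ) (lo hi : ℝ), 0 < lo → 0 < hi →
      (∀ s : ℝ, 0 < s → ∀ n, lo * s ≤ V s n ∧ V s n ≤ hi * s) →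
      ∀ s : ℝ, 0 < s → ∀ n : Fin N, ∀ c θ : ℝ,
        c ∈ Set.Ioo 0 (s/(1+τC)) → θ ∈ Set.Icc (0:ℝ) 1 →
      Real.exp ((1-β) * Real.log c + β * Real.log (boxCoxInv γ
        (∑ n', P n n' * boxCox γ (V (Rn n' θ * (s - (1+τC)*c)) n'))))
        ≤ C1 ^ (1-β) * (β*(hi*M)) ^ β * s := by
    intro V lo hi hlo hhi hbd s hs n c θ hc hθ
    have hw := hwpos s c hc
    have hhiMw : 0 < hi*M*(s - (1+τC)*c) := mul_pos (mul_pos hhi hM0) hw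
    have hx : ∀ i, 0 < V (Rn i θ * (s - (1+τC)*c)) i := fun i =>
      lt_of_lt_of_le (mul_pos hlo (mul_pos (hRposI i θ hθ) hw))
        ((hbd _ (mul_pos (hRposI i θ hθ) hw) i).1)
    have hxle : ∀ i, V (Rn i θ * (s - (1+τC)*c)) i ≤ hi*M*(s - (1+τC)*c) := by
      intro i
      have h3 := mul_le_mul_of_nonneg_right (hMle i θ hθ) hw.le
      calc V (Rn i θ * (s - (1+τC)*c)) i
          ≤ hi * (Rn i θ * (s - (1+τC)*c)) := (hbd _ (mul_pos (hRposI i θ hθ) hw) i).2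
        _ ≤ hi * (M * (s - (1+τC)*c)) := mul_le_mul_of_nonneg_left h3 hhi.le
        _ = hi*M*(s - (1+τC)*c) := (mul_assoc _ _ _).symm
    have hKpos : 0 < boxCoxInv γ
        (∑ n', P n n' * boxCox γ (V (Rn n' θ * (s - (1+τC)*c)) n')) :=
      G_pos (hP n) (hP1 n) hx
    have hKle : boxCoxInv γ
        (∑ n', P n n' * boxCox γ (V (Rn n' θ * (s - (1+τC)*c)) n'))
        ≤ hi*M*(s - (1+τC)*c) := by
      have h1 : ∑ n', P n n' * boxCox γ (V (Rn n' θ * (s - (1+τC)*c)) n')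
          ≤ ∑ n', P n n' * boxCox γ (hi*M*(s - (1+τC)*c)) :=
        Finset.sum_le_sum (fun i _ =>
          mul_le_mul_of_nonneg_left (boxCox_mono_s7 γ (hx i) (hxle i)) (hP n i))
      calc boxCoxInv γ (∑ n', P n n' * boxCox γ (V (Rn n' θ * (s - (1+τC)*c)) n'))
          ≤ boxCoxInv γ (∑ n', P n n' * boxCox γ (hi*M*(s - (1+τC)*c))) :=
            G_le_G (hP n) (hP1 n) hx (fun _ => hhiMw) h1
        _ = hi*M*(s - (1+τC)*c) := G_const (hP1 n) hhiMw
    rw [exp_combo hc.1 hKpos]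
    calc c^(1-β) * boxCoxInv γ
          (∑ n', P n n' * boxCox γ (V (Rn n' θ * (s - (1+τC)*c)) n')) ^ β
        ≤ c^(1-β) * (hi*M*(s - (1+τC)*c))^β :=
          mul_le_mul_of_nonneg_left
            (Real.rpow_le_rpow hKpos.le hKle hβ0.le) (Real.rpow_nonneg hc.1.le _)
      _ = (hi*M)^β * (c^(1-β) * (s - (1+τC)*c)^β) := by
          rw [Real.mul_rpow (mul_pos hhi hM0).le hw.le]; ring
      _ ≤ (hi*M)^β * (C1^(1-β) * β^β * s) :=
          mul_le_mul_of_nonneg_left (amgm hβ0 hβ1 hq hc.1 hc.2)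
            (Real.rpow_nonneg (mul_pos hhi hM0).le _)
      _ = C1^(1-β) * (β*(hi*M))^β * s := by
          rw [Real.mul_rpow hβ0.le (mul_pos hhi hM0).le]; ring
  -- upper bound on Tb V
  have hTb_ub : ∀ (V : ℝ → Fin N → ℝ) (lo hi : ℝ), 0 < lo → 0 < hi →
      (∀ s : ℝ, 0 < s → ∀ n, lo * s ≤ V s n ∧ V s n ≤ hi * s) →
      ∀ s : ℝ, 0 < s → ∀ n, Tb V s n ≤ C1 ^ (1-β) * (β*(hi*M)) ^ β * s := by
    intro V lo hi hlo hhi hbd s hs n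
    rw [hTb]
    apply Real.sSup_le
    · rintro u ⟨c, hc, θ, hθ, rfl⟩
      exact helem V lo hi hlo hhi hbd s hs n c θ hc hθ
    · exact mul_nonneg (mul_nonneg (Real.rpow_nonneg hC10.le _)
        (Real.rpow_nonneg (mul_nonneg hβ0.le (mul_pos hhi hM0).le) _)) hs.le
  -- lower bound on Tb V
  have hcstar : ∀ s : ℝ, 0 < s → C1*s ∈ Set.Ioo 0 (s/(1+τC)) := by
    intro s hs
    constructor
    · exact mul_pos hC10 hs
    · rw [hC1_def, lt_div_iff₀ hq]
      calc (1-β)/(1+τC)*s*(1+τC) = (1-β)*s := by field_simp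
        _ < s := by nlinarith
  have hwstar : ∀ s : ℝ, s - (1+τC)*(C1*s) = β*s := by
    intro s; rw [hC1_def]; field_simp; ring
  have hTb_lb : ∀ (V : ℝ → Fin N → ℝ) (lo hi : ℝ), 0 < lo → 0 < hi →
      (∀ s : ℝ, 0 < s → ∀ n, lo * s ≤ V s n ∧ V s n ≤ hi * s) →
      ∀ s : ℝ, 0 < s → ∀ n, C1 ^ (1-β) * (β*(lo*m)) ^ β * s ≤ Tb V s n := by
    intro V lo hi hlo hhi hbd s hs n
    rw [hTb]
    have hθ0 : (0:ℝ) ∈ Set.Icc (0:ℝ) 1 := Set.mem_Icc.mpr ⟨le_refl 0, zero_le_one⟩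
    have hw : 0 < s - (1+τC)*(C1*s) := by rw [hwstar]; exact mul_pos hβ0 hs
    have hlom : 0 < β*(lo*m) := mul_pos hβ0 (mul_pos hlo hm0)
    have hloms : 0 < (β*(lo*m))*s := mul_pos hlom hs
    refine le_trans ?_ (le_csSup ⟨C1 ^ (1-β) * (β*(hi*M)) ^ β * s, ?_⟩
      ⟨C1*s, hcstar s hs, 0, hθ0, rfl⟩)
    · have hx : ∀ i, 0 < V (Rn i 0 * (s - (1+τC)*(C1*s))) i := fun i =>
        lt_of_lt_of_le (mul_pos hlo (mul_pos (hRposI i 0 hθ0) hw))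
          ((hbd _ (mul_pos (hRposI i 0 hθ0) hw) i).1)
      have hKpos : 0 < boxCoxInv γ
          (∑ n', P n n' * boxCox γ (V (Rn n' 0 * (s - (1+τC)*(C1*s))) n')) :=
        G_pos (hP n) (hP1 n) hx
      have hKge : (β*(lo*m))*s ≤ boxCoxInv γ
          (∑ n', P n n' * boxCox γ (V (Rn n' 0 * (s - (1+τC)*(C1*s))) n')) := by
        have hxge : ∀ i, (β*(lo*m))*s ≤ V (Rn i 0 * (s - (1+τC)*(C1*s))) i := by
          intro i
          have h3 := mul_le_mul_of_nonneg_right (hmle i 0 hθ0) hw.le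
          calc (β*(lo*m))*s = lo * (m * (β*s)) := by ring
            _ = lo * (m * (s - (1+τC)*(C1*s))) := by rw [hwstar]
            _ ≤ lo * (Rn i 0 * (s - (1+τC)*(C1*s))) := mul_le_mul_of_nonneg_left h3 hlo.le
            _ ≤ V (Rn i 0 * (s - (1+τC)*(C1*s))) i :=
                (hbd _ (mul_pos (hRposI i 0 hθ0) hw) i).1
        have h1 : ∑ n', P n n' * boxCox γ ((β*(lo*m))*s)
            ≤ ∑ n', P n n' * boxCox γ (V (Rn n' 0 * (s - (1+τC)*(C1*s))) n') :=
          Finset.sum_le_sum (fun i _ =>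
            mul_le_mul_of_nonneg_left (boxCox_mono_s7 γ hloms (hxge i)) (hP n i))
        calc (β*(lo*m))*s = boxCoxInv γ (∑ n', P n n' * boxCox γ ((β*(lo*m))*s)) :=
              (G_const (hP1 n) hloms).symm
          _ ≤ _ := G_le_G (hP n) (hP1 n) (fun _ => hloms) hx h1
      rw [exp_combo (mul_pos hC10 hs) hKpos]
      calc C1 ^ (1-β) * (β*(lo*m)) ^ β * s = (C1*s)^(1-β) * (((β*(lo*m))*s)^β) :=
            (rpow_combo hs hC10.le hlom.le).symm
        _ ≤ (C1*s)^(1-β) * boxCoxInv γ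
            (∑ n', P n n' * boxCox γ (V (Rn n' 0 * (s - (1+τC)*(C1*s))) n')) ^ β :=
            mul_le_mul_of_nonneg_left
              (Real.rpow_le_rpow hloms.le hKge hβ0.le)
              (Real.rpow_nonneg (mul_pos hC10 hs).le _)
    · rintro u ⟨c, hc, θ, hθ, rfl⟩
      exact helem V lo hi hlo hhi hbd s hs n c θ hc hθ
  -- value of Tb on positive multiples of the linear candidate value function
  have hθ0I : (0:ℝ) ∈ Set.Icc (0:ℝ) 1 := Set.mem_Icc.mpr ⟨le_refl 0, zero_le_one⟩
  have hfix : ∀ μ : ℝ, 0 < μ → ∀ V : ℝ → Fin N → ℝ,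
      (∀ s' n', V s' n' = μ * (astar n' * s')) →
      ∀ s : ℝ, 0 < s → ∀ n, Tb V s n = μ ^ β * (astar n * s) := by
    intro μ hμ V hV s hs n
    have hκn := hκ n astar
    set f : ℝ → ℝ := fun θ => ∑ n', P n n' * boxCox γ (astar n' * Rn n' θ) with hf_def
    have hfc : ContinuousOn f (Set.Icc (0:ℝ) 1) := by
      apply continuousOn_finset_sum
      intro i _
      apply ContinuousOn.mul continuousOn_const
      have hrw : (fun θ : ℝ => astar i * Rn i θ)
          = fun θ : ℝ => astar i * ((1/υ) * ((1 + r i) * θ + R * (1 - θ))) := by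
        funext θ; rw [hRn]
      refine (boxCox_continuousOn γ).comp ?_
        (fun θ hθ => Set.mem_Ioi.mpr (mul_pos (hastar_pos i) (hRposI i θ hθ)))
      rw [hrw]; fun_prop
    obtain ⟨θs, hθs, hmax⟩ :=
      isCompact_Icc.exists_isMaxOn (Set.nonempty_Icc.mpr zero_le_one) hfc
    have hsup : sSup (f '' Set.Icc (0:ℝ) 1) = f θs :=
      IsGreatest.csSup_eq ⟨Set.mem_image_of_mem f hθs,
        by rintro y ⟨θ, hθ, rfl⟩; exact hmax hθ⟩
    rw [hsup] at hκn
    have hκpos : 0 < boxCoxInv γ (f θs) :=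
      G_pos (hP n) (hP1 n) (fun i => mul_pos (hastar_pos i) (hRposI i θs hθs))
    rw [hTb]
    apply IsGreatest.csSup_eq
    constructor
    · -- the optimum is attained at (C1*s, θs)
      refine ⟨C1*s, hcstar s hs, θs, hθs, ?_⟩
      rw [hwstar s]
      have hterm : ∀ i : Fin N, V (Rn i θs * (β*s)) i
          = (μ*(β*s)) * (astar i * Rn i θs) := by
        intro i; rw [hV]; ring
      have hKrw : boxCoxInv γ (∑ n', P n n' * boxCox γ (V (Rn n' θs * (β*s)) n'))
          = (μ*(β*s)) * boxCoxInv γ (f θs) := by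
        calc boxCoxInv γ (∑ n', P n n' * boxCox γ (V (Rn n' θs * (β*s)) n'))
            = boxCoxInv γ (∑ n', P n n' * boxCox γ ((μ*(β*s)) * (astar n' * Rn n' θs))) := by
              congr 1; exact Finset.sum_congr rfl (fun i _ => by rw [hterm i])
          _ = (μ*(β*s)) * boxCoxInv γ (∑ n', P n n' * boxCox γ (astar n' * Rn n' θs)) :=
              G_hom (hP n) (hP1 n) (fun i => mul_pos (hastar_pos i) (hRposI i θs hθs))
                (mul_pos hμ (mul_pos hβ0 hs))
          _ = (μ*(β*s)) * boxCoxInv γ (f θs) := rfl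
      rw [hKrw, exp_combo (mul_pos hC10 hs)
        (mul_pos (mul_pos hμ (mul_pos hβ0 hs)) hκpos)]
      rw [hastar_eq n, hκn]
      have h1 : (μ*(β*s)) * boxCoxInv γ (f θs) = (μ*(β * boxCoxInv γ (f θs)))*s := by ring
      rw [h1, rpow_combo hs hC10.le
        (mul_nonneg hμ.le (mul_nonneg hβ0.le hκpos.le)),
        Real.mul_rpow hμ.le (mul_nonneg hβ0.le hκpos.le)]
      ring
    · -- every element of the set is at most the candidate value
      rintro y ⟨c, hc, θ, hθ, rfl⟩
      have hw := hwpos s c hc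
      have hterm : ∀ i : Fin N, V (Rn i θ * (s - (1+τC)*c)) i
          = (μ*(s - (1+τC)*c)) * (astar i * Rn i θ) := by
        intro i; rw [hV]; ring
      have hfθpos : 0 < boxCoxInv γ (f θ) :=
        G_pos (hP n) (hP1 n) (fun i => mul_pos (hastar_pos i) (hRposI i θ hθ))
      have hKrw : boxCoxInv γ (∑ n', P n n' * boxCox γ (V (Rn n' θ * (s - (1+τC)*c)) n'))
          = (μ*(s - (1+τC)*c)) * boxCoxInv γ (f θ) := by
        calc boxCoxInv γ (∑ n', P n n' * boxCox γ (V (Rn n' θ * (s - (1+τC)*c)) n'))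
            = boxCoxInv γ (∑ n', P n n' * boxCox γ
                ((μ*(s - (1+τC)*c)) * (astar n' * Rn n' θ))) := by
              congr 1; exact Finset.sum_congr rfl (fun i _ => by rw [hterm i])
          _ = (μ*(s - (1+τC)*c)) * boxCoxInv γ (∑ n', P n n' * boxCox γ (astar n' * Rn n' θ)) :=
              G_hom (hP n) (hP1 n) (fun i => mul_pos (hastar_pos i) (hRposI i θ hθ))
                (mul_pos hμ hw)
          _ = (μ*(s - (1+τC)*c)) * boxCoxInv γ (f θ) := rfl
      have hfle : boxCoxInv γ (f θ) ≤ boxCoxInv γ (f θs) :=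
        G_le_G (hP n) (hP1 n)
          (fun i => mul_pos (hastar_pos i) (hRposI i θ hθ))
          (fun i => mul_pos (hastar_pos i) (hRposI i θs hθs)) (hmax hθ)
      rw [hKrw, exp_combo hc.1 (mul_pos (mul_pos hμ hw) hfθpos)]
      calc c^(1-β) * ((μ*(s - (1+τC)*c)) * boxCoxInv γ (f θ))^β
          ≤ c^(1-β) * ((μ*(s - (1+τC)*c)) * boxCoxInv γ (f θs))^β :=
            mul_le_mul_of_nonneg_left
              (Real.rpow_le_rpow (mul_pos (mul_pos hμ hw) hfθpos).le
                (mul_le_mul_of_nonneg_left hfle (mul_pos hμ hw).le) hβ0.le)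
              (Real.rpow_nonneg hc.1.le _)
        _ = (μ * boxCoxInv γ (f θs))^β * (c^(1-β) * (s - (1+τC)*c)^β) := by
            rw [show (μ*(s - (1+τC)*c)) * boxCoxInv γ (f θs)
                = (μ * boxCoxInv γ (f θs)) * (s - (1+τC)*c) by ring,
              Real.mul_rpow (mul_pos hμ hκpos).le hw.le]
            ring
        _ ≤ (μ * boxCoxInv γ (f θs))^β * (C1^(1-β) * β^β * s) :=
            mul_le_mul_of_nonneg_left (amgm hβ0 hβ1 hq hc.1 hc.2)
              (Real.rpow_nonneg (mul_pos hμ hκpos).le _)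
        _ = μ^β * (astar n * s) := by
            rw [hastar_eq n, hκn,
              Real.mul_rpow hμ.le hκpos.le,
              Real.mul_rpow hβ0.le hκpos.le]
            ring
  -- monotonicity of the Bellman operator
  have hmono : ∀ (V W : ℝ → Fin N → ℝ) (loV loW hiW : ℝ), 0 < loV →
      (∀ s : ℝ, 0 < s → ∀ n, loV * s ≤ V s n) →
      0 < loW → 0 < hiW →
      (∀ s : ℝ, 0 < s → ∀ n, loW * s ≤ W s n ∧ W s n ≤ hiW * s) →
      (∀ s : ℝ, 0 < s → ∀ n, V s n ≤ W s n) →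
      ∀ s : ℝ, 0 < s → ∀ n, Tb V s n ≤ Tb W s n := by
    intro V W loV loW hiW hloV hVlo hloW hhiW hWbd hVW s hs n
    rw [hTb, hTb]
    have hbddW : BddAbove {u : ℝ |
        ∃ c ∈ Set.Ioo 0 (s / (1 + τC)), ∃ θ ∈ Set.Icc (0:ℝ) 1,
          u = Real.exp ((1 - β) * Real.log c + β * Real.log (boxCoxInv γ
            (∑ n', P n n' * boxCox γ (W (Rn n' θ * (s - (1 + τC) * c)) n'))))} := by
      refine ⟨C1 ^ (1-β) * (β*(hiW*M)) ^ β * s, ?_⟩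
      rintro u ⟨c, hc, θ, hθ, rfl⟩
      exact helem W loW hiW hloW hhiW hWbd s hs n c θ hc hθ
    apply Real.sSup_le
    · rintro u ⟨c, hc, θ, hθ, rfl⟩
      have hw := hwpos s c hc
      have hxV : ∀ i, 0 < V (Rn i θ * (s - (1+τC)*c)) i := fun i =>
        lt_of_lt_of_le (mul_pos hloV (mul_pos (hRposI i θ hθ) hw))
          (hVlo _ (mul_pos (hRposI i θ hθ) hw) i)
      have hxW : ∀ i, 0 < W (Rn i θ * (s - (1+τC)*c)) i := fun i =>
        lt_of_lt_of_le (hxV i) (hVW _ (mul_pos (hRposI i θ hθ) hw) i)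
      have hKV : 0 < boxCoxInv γ
          (∑ n', P n n' * boxCox γ (V (Rn n' θ * (s - (1+τC)*c)) n')) :=
        G_pos (hP n) (hP1 n) hxV
      have hKle : boxCoxInv γ
            (∑ n', P n n' * boxCox γ (V (Rn n' θ * (s - (1+τC)*c)) n'))
          ≤ boxCoxInv γ
            (∑ n', P n n' * boxCox γ (W (Rn n' θ * (s - (1+τC)*c)) n')) :=
        G_le_G (hP n) (hP1 n) hxV hxW
          (Finset.sum_le_sum (fun i _ => mul_le_mul_of_nonneg_left
            (boxCox_mono_s7 γ (hxV i) (hVW _ (mul_pos (hRposI i θ hθ) hw) i)) (hP n i)))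
      have hexp : Real.exp ((1-β) * Real.log c + β * Real.log (boxCoxInv γ
            (∑ n', P n n' * boxCox γ (V (Rn n' θ * (s - (1+τC)*c)) n'))))
          ≤ Real.exp ((1-β) * Real.log c + β * Real.log (boxCoxInv γ
            (∑ n', P n n' * boxCox γ (W (Rn n' θ * (s - (1+τC)*c)) n')))) := by
        apply Real.exp_le_exp.mpr
        exact add_le_add_right (mul_le_mul_of_nonneg_left
          (Real.log_le_log hKV hKle) hβ0.le) _
      exact le_trans hexp (le_csSup hbddW ⟨c, hc, θ, hθ, rfl⟩)
    · exact le_trans (Real.exp_pos _).le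
        (le_csSup hbddW ⟨C1*s, hcstar s hs, 0, hθ0I, rfl⟩)
  refine ⟨?_, ?_, ?_⟩
  · -- (i) Tb maps 𝒱 into 𝒱
    intro V hV
    rw [hInV] at hV ⊢
    obtain ⟨lo, hi, hlo, hbd⟩ := hV
    have hhi : 0 < hi := by
      have h1 := (hbd 1 one_pos ⟨0, hN⟩).1
      have h2 := (hbd 1 one_pos ⟨0, hN⟩).2
      nlinarith
    refine ⟨C1 ^ (1-β) * (β*(lo*m)) ^ β, C1 ^ (1-β) * (β*(hi*M)) ^ β, ?_, ?_⟩
    · exact mul_pos (Real.rpow_pos_of_pos hC10 _)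
        (Real.rpow_pos_of_pos (mul_pos hβ0 (mul_pos hlo hm0)) _)
    · intro s hs n
      exact ⟨hTb_lb V lo hi hlo hhi hbd s hs n, hTb_ub V lo hi hlo hhi hbd s hs n⟩
  · -- (ii) the linear candidate is a fixed point
    intro s hs n
    have := hfix 1 one_pos (fun s' n' => astar n' * s') (fun s' n' => (one_mul _).symm) s hs n
    rwa [Real.one_rpow, one_mul] at this
  · -- (iii) uniqueness of the fixed point in 𝒱
    intro V hV hfixV s hs n
    rw [hInV] at hV
    obtain ⟨lo, hi, hlo, hbd⟩ := hV
    have hhi : 0 < hi := by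
      have h1 := (hbd 1 one_pos ⟨0, hN⟩).1
      have h2 := (hbd 1 one_pos ⟨0, hN⟩).2
      nlinarith
    set amin : ℝ := Finset.univ.inf' Finset.univ_nonempty astar with hamin_def
    set amax : ℝ := Finset.univ.sup' Finset.univ_nonempty astar with hamax_def
    have hamin0 : 0 < amin := by
      rw [hamin_def, Finset.lt_inf'_iff]; exact fun i _ => hastar_pos i
    have haminle : ∀ i, amin ≤ astar i := fun i => Finset.inf'_le _ (Finset.mem_univ i)
    have hamaxge : ∀ i, astar i ≤ amax := fun i => Finset.le_sup' _ (Finset.mem_univ i)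
    have hamax0 : 0 < amax := lt_of_lt_of_le (hastar_pos ⟨0, hN⟩) (hamaxge ⟨0, hN⟩)
    set lam : ℝ := max (hi / amin) 1 with hlam_def
    set mu : ℝ := min (lo / amax) 1 with hmu_def
    have hlam1 : 1 ≤ lam := le_max_right _ _
    have hlam0 : 0 < lam := lt_of_lt_of_le one_pos hlam1
    have hmu0 : 0 < mu := lt_min (div_pos hlo hamax0) one_pos
    have hVle : ∀ s : ℝ, 0 < s → ∀ n, V s n ≤ lam * (astar n * s) := by
      intro s hs n
      have h1 : hi ≤ lam * amin := by
        have := le_max_left (hi / amin) 1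
        calc hi = hi / amin * amin := by field_simp
          _ ≤ lam * amin := mul_le_mul_of_nonneg_right this hamin0.le
      have h2 : lam * amin ≤ lam * astar n :=
        mul_le_mul_of_nonneg_left (haminle n) hlam0.le
      calc V s n ≤ hi * s := (hbd s hs n).2
        _ ≤ lam * astar n * s := mul_le_mul_of_nonneg_right (le_trans h1 h2) hs.le
        _ = lam * (astar n * s) := mul_assoc _ _ _
    have hVge : ∀ s : ℝ, 0 < s → ∀ n, mu * (astar n * s) ≤ V s n := by
      intro s hs n
      have h1 : mu * amax ≤ lo := by
        have := min_le_left (lo / amax) 1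
        calc mu * amax ≤ lo / amax * amax := mul_le_mul_of_nonneg_right this hamax0.le
          _ = lo := by field_simp
      have h2 : mu * astar n ≤ mu * amax :=
        mul_le_mul_of_nonneg_left (hamaxge n) hmu0.le
      calc mu * (astar n * s) = mu * astar n * s := (mul_assoc _ _ _).symm
        _ ≤ lo * s := mul_le_mul_of_nonneg_right (le_trans h2 h1) hs.le
        _ ≤ V s n := (hbd s hs n).1
    have haux : ∀ (t : ℝ), 0 < t → ∀ s : ℝ, 0 < s → ∀ n,
        (t * amin) * s ≤ t * (astar n * s) ∧ t * (astar n * s) ≤ (t * amax) * s := by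
      intro t ht s hs n
      constructor
      · calc (t * amin) * s ≤ (t * astar n) * s :=
            mul_le_mul_of_nonneg_right
              (mul_le_mul_of_nonneg_left (haminle n) ht.le) hs.le
          _ = t * (astar n * s) := mul_assoc _ _ _
      · calc t * (astar n * s) = (t * astar n) * s := (mul_assoc _ _ _).symm
          _ ≤ (t * amax) * s :=
            mul_le_mul_of_nonneg_right
              (mul_le_mul_of_nonneg_left (hamaxge n) ht.le) hs.le
    -- the iteration bounds
    have hind : ∀ k : ℕ, ∀ s : ℝ, 0 < s → ∀ n,
        V s n ≤ lam ^ ((β:ℝ) ^ k) * (astar n * s) ∧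
        mu ^ ((β:ℝ) ^ k) * (astar n * s) ≤ V s n := by
      intro k
      induction k with
      | zero =>
        intro s hs n
        simp only [pow_zero, Real.rpow_one]
        exact ⟨hVle s hs n, hVge s hs n⟩
      | succ k ih =>
        intro s hs n
        have hlamk : 0 < lam ^ ((β:ℝ) ^ k) := Real.rpow_pos_of_pos hlam0 _
        have hmuk : 0 < mu ^ ((β:ℝ) ^ k) := Real.rpow_pos_of_pos hmu0 _
        have hpowlam : lam ^ ((β:ℝ) ^ (k+1)) = (lam ^ ((β:ℝ) ^ k)) ^ β := by
          rw [pow_succ, Real.rpow_mul hlam0.le]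
        have hpowmu : mu ^ ((β:ℝ) ^ (k+1)) = (mu ^ ((β:ℝ) ^ k)) ^ β := by
          rw [pow_succ, Real.rpow_mul hmu0.le]
        constructor
        · -- upper bound
          have h1 : Tb V s n ≤
              Tb (fun s' n' => lam ^ ((β:ℝ) ^ k) * (astar n' * s')) s n :=
            hmono V (fun s' n' => lam ^ ((β:ℝ) ^ k) * (astar n' * s'))
              lo (lam ^ ((β:ℝ) ^ k) * amin) (lam ^ ((β:ℝ) ^ k) * amax)
              hlo (fun s hs n => (hbd s hs n).1)
              (mul_pos hlamk hamin0) (mul_pos hlamk hamax0)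
              (fun s hs n => haux _ hlamk s hs n)
              (fun s hs n => (ih s hs n).1) s hs n
          have h2 := hfix (lam ^ ((β:ℝ) ^ k)) hlamk
            (fun s' n' => lam ^ ((β:ℝ) ^ k) * (astar n' * s')) (fun _ _ => rfl) s hs n
          rw [hpowlam, ← h2]
          rw [← hfixV s hs n]
          exact h1
        · -- lower bound
          have h1 : Tb (fun s' n' => mu ^ ((β:ℝ) ^ k) * (astar n' * s')) s n ≤
              Tb V s n :=
            hmono (fun s' n' => mu ^ ((β:ℝ) ^ k) * (astar n' * s')) V
              (mu ^ ((β:ℝ) ^ k) * amin) lo hi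
              (mul_pos hmuk hamin0)
              (fun s hs n => (haux _ hmuk s hs n).1)
              hlo hhi hbd
              (fun s hs n => (ih s hs n).2) s hs n
          have h2 := hfix (mu ^ ((β:ℝ) ^ k)) hmuk
            (fun s' n' => mu ^ ((β:ℝ) ^ k) * (astar n' * s')) (fun _ _ => rfl) s hs n
          rw [hpowmu, ← h2]
          rw [← hfixV s hs n]
          exact h1
    -- pass to the limit
    have hβk : Filter.Tendsto (fun k : ℕ => (β:ℝ) ^ k) Filter.atTop (nhds 0) :=
      tendsto_pow_atTop_nhds_zero_of_lt_one hβ0.le hβ1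
    have hrlim : ∀ t : ℝ, 0 < t →
        Filter.Tendsto (fun k : ℕ => t ^ ((β:ℝ) ^ k)) Filter.atTop (nhds 1) := by
      intro t ht
      have hc : Continuous (fun x : ℝ => t ^ x) := by
        have : (fun x : ℝ => t ^ x) = fun x => Real.exp (Real.log t * x) := by
          funext x; rw [Real.rpow_def_of_pos ht]
        rw [this]; fun_prop
      have := (hc.continuousAt (x := 0)).tendsto.comp hβk
      simpa [Real.rpow_zero, Function.comp_def] using this
    have hle : V s n ≤ astar n * s := by
      have hlim : Filter.Tendsto (fun k : ℕ => lam ^ ((β:ℝ) ^ k) * (astar n * s))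
          Filter.atTop (nhds (astar n * s)) := by
        have := (hrlim lam hlam0).mul_const (astar n * s)
        simpa using this
      exact ge_of_tendsto' hlim (fun k => (hind k s hs n).1)
    have hge : astar n * s ≤ V s n := by
      have hlim : Filter.Tendsto (fun k : ℕ => mu ^ ((β:ℝ) ^ k) * (astar n * s))
          Filter.atTop (nhds (astar n * s)) := by
        have := (hrlim mu hmu0).mul_const (astar n * s)
        simpa using this
      exact le_of_tendsto' hlim (fun k => (hind k s hs n).2)
    exact le_antisymm hle hge
end

section
/- Let N ≥ 1 and let c_{ij} ≥ 0 and g_{ij} > 0 for 1 ≤ i, j ≤ N. For real z let A(z) be the N×N matrix with (i,j)-entry c_{ij}·g_{ij}^z, and let ρ(A(z)) denote its spectral radius. Then the function z ↦ ρ(A(z)) is convex on ℝ. -/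
/-- The spectral radius of a square complex matrix: the maximum of the moduli of its
complex eigenvalues (elements of its spectrum). -/
noncomputable def matSpecRad {N : ℕ} (A : Matrix (Fin N) (Fin N) ℂ) : ℝ :=
  sSup ((fun w : ℂ => ‖w‖) '' spectrum ℂ A)


open Finset
open scoped ENNReal NNReal

/-- Two-weight Hölder: `∑ uᵢᵗ vᵢʳ ≤ (∑ u)ᵗ (∑ v)ʳ` for `t + r = 1`. -/
lemma hoelder_tw {ι : Type*} (s : Finset ι) (u v : ι → ℝ) (hu : ∀ i ∈ s, 0 ≤ u i)
    (hv : ∀ i ∈ s, 0 ≤ v i) {t r : ℝ} (ht : 0 < t) (hr : 0 < r) (htr : t + r = 1) :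
    ∑ i ∈ s, u i ^ t * v i ^ r ≤ (∑ i ∈ s, u i) ^ t * (∑ i ∈ s, v i) ^ r := by
  have ht1 : t < 1 := by linarith
  have hpq : Real.HolderConjugate (1 / t) (1 / r) := by
    constructor
    · rw [one_div, one_div, inv_inv, inv_inv, inv_one]; exact htr
    · positivity
    · positivity
  have := Real.inner_le_Lp_mul_Lq_of_nonneg s (f := fun i => u i ^ t) (g := fun i => v i ^ r)
    hpq (fun i _ => Real.rpow_nonneg (hu i ‹_›) t) (fun i _ => Real.rpow_nonneg (hv i ‹_›) r)
  simp only [one_div_one_div] at this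
  calc ∑ i ∈ s, u i ^ t * v i ^ r
      ≤ (∑ i ∈ s, (u i ^ t) ^ (1/t)) ^ t * (∑ i ∈ s, (v i ^ r) ^ (1/r)) ^ r := this
    _ = (∑ i ∈ s, u i) ^ t * (∑ i ∈ s, v i) ^ r := by
        congr 2 <;> apply Finset.sum_congr rfl <;> intro i hi
        · rw [← Real.rpow_mul (hu i hi), mul_one_div_cancel ht.ne', Real.rpow_one]
        · rw [← Real.rpow_mul (hv i hi), mul_one_div_cancel hr.ne', Real.rpow_one]

lemma pow_entries_nonneg {N : ℕ} {U : Matrix (Fin N) (Fin N) ℝ} (hU : ∀ i j, 0 ≤ U i j) :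
    ∀ k i j, 0 ≤ (U ^ k) i j := by
  intro k
  induction k with
  | zero => intro i j; rw [pow_zero, Matrix.one_apply]; split <;> norm_num
  | succ k ih =>
      intro i j
      rw [pow_succ, Matrix.mul_apply]
      exact Finset.sum_nonneg fun l _ => mul_nonneg (ih i l) (hU l j)

lemma pow_entry_le {N : ℕ} {U V W : Matrix (Fin N) (Fin N) ℝ}
    (hU : ∀ i j, 0 ≤ U i j) (hV : ∀ i j, 0 ≤ V i j) (hW0 : ∀ i j, 0 ≤ W i j)
    {t r : ℝ} (ht : 0 < t) (hr : 0 < r) (htr : t + r = 1)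
    (hW : ∀ i j, W i j ≤ U i j ^ t * V i j ^ r) :
    ∀ k i j, (W ^ k) i j ≤ ((U ^ k) i j) ^ t * ((V ^ k) i j) ^ r := by
  intro k
  induction k with
  | zero =>
      intro i j
      simp only [pow_zero, Matrix.one_apply]
      split
      · rw [Real.one_rpow, Real.one_rpow, mul_one]
      · rw [Real.zero_rpow ht.ne', zero_mul]
  | succ k ih =>
      intro i j
      simp only [pow_succ, Matrix.mul_apply]
      calc ∑ l, (W ^ k) i l * W l j
          ≤ ∑ l, ((U ^ k) i l * U l j) ^ t * (((V ^ k) i l) * V l j) ^ r := by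
            apply Finset.sum_le_sum
            intro l _
            calc (W ^ k) i l * W l j
                ≤ (((U ^ k) i l) ^ t * ((V ^ k) i l) ^ r) * (U l j ^ t * V l j ^ r) :=
                  mul_le_mul (ih i l) (hW l j) (hW0 l j) (mul_nonneg
                    (Real.rpow_nonneg (pow_entries_nonneg hU k i l) t)
                    (Real.rpow_nonneg (pow_entries_nonneg hV k i l) r))
              _ = ((U ^ k) i l * U l j) ^ t * (((V ^ k) i l) * V l j) ^ r := by
                  rw [Real.mul_rpow (pow_entries_nonneg hU k i l) (hU l j),
                    Real.mul_rpow (pow_entries_nonneg hV k i l) (hV l j)]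
                  ring
        _ ≤ (∑ l, (U ^ k) i l * U l j) ^ t * (∑ l, (V ^ k) i l * V l j) ^ r :=
            hoelder_tw _ _ _
              (fun l _ => mul_nonneg (pow_entries_nonneg hU k i l) (hU l j))
              (fun l _ => mul_nonneg (pow_entries_nonneg hV k i l) (hV l j)) ht hr htr

attribute [local instance] Matrix.linftyOpNormedRing Matrix.linftyOpNormedAlgebra

lemma nnnorm_map_eq {N : ℕ} (P : Matrix (Fin N) (Fin N) ℝ) (hP : ∀ i j, 0 ≤ P i j) :
    ‖P.map (fun x => (x : ℂ))‖₊ = Finset.univ.sup fun i => ∑ j, (P i j).toNNReal := by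
  rw [Matrix.linfty_opNNNorm_def]
  exact congrArg _ (funext fun i => Finset.sum_congr rfl fun j _ => by
    rw [Matrix.map_apply, Complex.nnnorm_real, Real.nnnorm_of_nonneg (hP i j),
      Real.toNNReal_of_nonneg (hP i j)])

lemma norm_map_le_geom {N : ℕ} {U V W : Matrix (Fin N) (Fin N) ℝ}
    (hU : ∀ i j, 0 ≤ U i j) (hV : ∀ i j, 0 ≤ V i j) (hW0 : ∀ i j, 0 ≤ W i j)
    {t r : ℝ} (ht : 0 < t) (hr : 0 < r) (htr : t + r = 1)
    (hW : ∀ i j, W i j ≤ U i j ^ t * V i j ^ r) :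
    ‖W.map (fun x => (x : ℂ))‖ ≤
      ‖U.map (fun x => (x : ℂ))‖ ^ t * ‖V.map (fun x => (x : ℂ))‖ ^ r := by
  have key : ‖W.map (fun x => (x : ℂ))‖₊ ≤
      ‖U.map (fun x => (x : ℂ))‖₊ ^ t * ‖V.map (fun x => (x : ℂ))‖₊ ^ r := by
    rw [nnnorm_map_eq U hU, nnnorm_map_eq V hV, nnnorm_map_eq W hW0]
    apply Finset.sup_le
    intro i _
    calc (∑ j, (W i j).toNNReal)
        ≤ (∑ j, (U i j).toNNReal) ^ t * (∑ j, (V i j).toNNReal) ^ r := by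
          rw [← NNReal.coe_le_coe]
          push_cast [NNReal.coe_rpow, Real.coe_toNNReal _ (hW0 i _),
            Real.coe_toNNReal _ (hU i _), Real.coe_toNNReal _ (hV i _)]
          calc (∑ j, W i j) ≤ ∑ j, U i j ^ t * V i j ^ r :=
                Finset.sum_le_sum fun j _ => hW i j
            _ ≤ (∑ j, U i j) ^ t * (∑ j, V i j) ^ r :=
                hoelder_tw _ _ _ (fun j _ => hU i j) (fun j _ => hV i j) ht hr htr
      _ ≤ (Finset.univ.sup fun i => ∑ j, (U i j).toNNReal) ^ t *
            (Finset.univ.sup fun i => ∑ j, (V i j).toNNReal) ^ r := by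
          exact mul_le_mul'
            (NNReal.rpow_le_rpow (Finset.le_sup (f := fun i => ∑ j, (U i j).toNNReal)
              (Finset.mem_univ i)) ht.le)
            (NNReal.rpow_le_rpow (Finset.le_sup (f := fun i => ∑ j, (V i j).toNNReal)
              (Finset.mem_univ i)) hr.le)
  have h2 := NNReal.coe_le_coe.2 key
  rwa [NNReal.coe_mul, NNReal.coe_rpow, NNReal.coe_rpow, coe_nnnorm, coe_nnnorm,
    coe_nnnorm] at h2

open Filter Topology in
lemma specRad_facts {N : ℕ} (hN : 1 ≤ N) (M : Matrix (Fin N) (Fin N) ℂ) :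
    0 ≤ matSpecRad M ∧
      Tendsto (fun k : ℕ => ‖M ^ k‖ ^ (1 / k : ℝ)) atTop (𝓝 (matSpecRad M)) := by
  haveI : Nonempty (Fin N) := ⟨⟨0, hN⟩⟩
  haveI : CompleteSpace (Matrix (Fin N) (Fin N) ℂ) := FiniteDimensional.complete ℂ _
  obtain ⟨z, hz, hz'⟩ := spectrum.exists_nnnorm_eq_spectralRadius M
  have hsup : matSpecRad M = ‖z‖ := by
    unfold matSpecRad
    apply IsGreatest.csSup_eq
    constructor
    · exact ⟨z, hz, by simp⟩
    · rintro _ ⟨w, hw, rfl⟩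
      have h1 : (‖w‖₊ : ℝ≥0∞) ≤ spectralRadius ℂ M := by
        exact le_iSup₂ (f := fun k (_ : k ∈ spectrum ℂ M) => (‖k‖₊ : ℝ≥0∞)) w hw
      rw [← hz'] at h1
      have := ENNReal.coe_le_coe.1 h1
      calc (fun w : ℂ => ‖w‖) w = ‖w‖ := rfl
        _ ≤ ‖z‖ := this
  constructor
  · rw [hsup]; exact norm_nonneg z
  · have h := spectrum.pow_norm_pow_one_div_tendsto_nhds_spectralRadius M
    have hne : spectralRadius ℂ M ≠ ⊤ := by rw [← hz']; exact ENNReal.coe_ne_top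
    have h2 := (ENNReal.tendsto_toReal hne).comp h
    have h3 : (spectralRadius ℂ M).toReal = matSpecRad M := by
      rw [← hz', hsup]; simp
    rw [h3] at h2
    refine h2.congr fun n => ?_
    exact ENNReal.toReal_ofReal (Real.rpow_nonneg (norm_nonneg _) _)

open Filter Topology in
/-- Proposition 1 of Beare–Toda 2022: for `c_ij ≥ 0` and `g_ij > 0`, the
spectral radius of the matrix `A(z) = (c_ij g_ij^z)` is a convex function of real `z`. -/
theorem stmt9 (N : ℕ) (hN : 1 ≤ N)
    (c g : Fin N → Fin N → ℝ)
    (hc : ∀ i j, 0 ≤ c i j) (hg : ∀ i j, 0 < g i j)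
    (A : ℝ → Matrix (Fin N) (Fin N) ℝ)
    (hA : ∀ z i j, A z i j = c i j * g i j ^ z) :
    ConvexOn ℝ Set.univ (fun z => matSpecRad ((A z).map fun x => (x : ℂ))) := by
  have hA0 : ∀ z i j, 0 ≤ A z i j := fun z i j => by
    rw [hA]; exact mul_nonneg (hc i j) (Real.rpow_nonneg (hg i j).le z)
  refine ⟨convex_univ, ?_⟩
  intro x _ y _ t r ht hr htr
  simp only [smul_eq_mul]
  -- trivial edge cases
  rcases ht.eq_or_lt with ht0 | ht
  · subst ht0; simp at htr; simp [htr]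
  rcases hr.eq_or_lt with hr0 | hr
  · subst hr0; simp at htr; simp [htr]
  -- main case
  set m := t * x + r * y with hm
  -- entrywise bound
  have hE : ∀ i j, A m i j ≤ A x i j ^ t * A y i j ^ r := by
    intro i j
    rw [hA, hA, hA]
    rw [Real.mul_rpow (hc i j) (Real.rpow_nonneg (hg i j).le x),
      Real.mul_rpow (hc i j) (Real.rpow_nonneg (hg i j).le y),
      ← Real.rpow_mul (hg i j).le, ← Real.rpow_mul (hg i j).le]
    rw [show c i j ^ t * g i j ^ (x * t) * (c i j ^ r * g i j ^ (y * r))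
        = (c i j ^ t * c i j ^ r) * (g i j ^ (x * t) * g i j ^ (y * r)) from by ring]
    rw [← Real.rpow_add' (hc i j) (by rw [htr]; exact one_ne_zero), htr, Real.rpow_one,
      ← Real.rpow_add (hg i j)]
    rw [show x * t + y * r = t * x + r * y from by ring]
  -- powers map
  have hmap : ∀ z (k : ℕ), ((A z).map fun x => (x : ℂ)) ^ k
      = ((A z) ^ k).map fun x => (x : ℂ) := by
    intro z k
    have := map_pow (Complex.ofRealHom.mapMatrix (m := Fin N)) (A z) k
    exact this.symm
  -- per-power norm inequality
  have hpow : ∀ k : ℕ, ‖((A m).map fun x => (x : ℂ)) ^ k‖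
      ≤ ‖((A x).map fun x => (x : ℂ)) ^ k‖ ^ t * ‖((A y).map fun x => (x : ℂ)) ^ k‖ ^ r := by
    intro k
    rw [hmap, hmap, hmap]
    exact norm_map_le_geom (pow_entries_nonneg (hA0 x) k) (pow_entries_nonneg (hA0 y) k)
      (pow_entries_nonneg (hA0 m) k) ht hr htr
      (pow_entry_le (hA0 x) (hA0 y) (hA0 m) ht hr htr hE k)
  -- take k-th roots
  have hroot : ∀ k : ℕ, ‖((A m).map fun x => (x : ℂ)) ^ k‖ ^ (1 / k : ℝ)
      ≤ (‖((A x).map fun x => (x : ℂ)) ^ k‖ ^ (1 / k : ℝ)) ^ t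
        * (‖((A y).map fun x => (x : ℂ)) ^ k‖ ^ (1 / k : ℝ)) ^ r := by
    intro k
    have h1 := Real.rpow_le_rpow (norm_nonneg _) (hpow k)
      (by positivity : (0 : ℝ) ≤ 1 / k)
    calc ‖((A m).map fun x => (x : ℂ)) ^ k‖ ^ (1 / k : ℝ)
        ≤ (‖((A x).map fun x => (x : ℂ)) ^ k‖ ^ t
            * ‖((A y).map fun x => (x : ℂ)) ^ k‖ ^ r) ^ (1 / k : ℝ) := h1
      _ = _ := by
          rw [Real.mul_rpow (Real.rpow_nonneg (norm_nonneg _) _)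
              (Real.rpow_nonneg (norm_nonneg _) _),
            ← Real.rpow_mul (norm_nonneg _), ← Real.rpow_mul (norm_nonneg _),
            ← Real.rpow_mul (norm_nonneg _), ← Real.rpow_mul (norm_nonneg _),
            mul_comm t (1 / (k : ℝ)), mul_comm r (1 / (k : ℝ))]
  -- limits
  obtain ⟨hm0, hmt⟩ := specRad_facts hN ((A m).map fun x => (x : ℂ))
  obtain ⟨hx0, hxt⟩ := specRad_facts hN ((A x).map fun x => (x : ℂ))
  obtain ⟨hy0, hyt⟩ := specRad_facts hN ((A y).map fun x => (x : ℂ))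
  have hlim : Tendsto (fun k : ℕ =>
      (‖((A x).map fun x => (x : ℂ)) ^ k‖ ^ (1 / k : ℝ)) ^ t
        * (‖((A y).map fun x => (x : ℂ)) ^ k‖ ^ (1 / k : ℝ)) ^ r) atTop
      (𝓝 ((matSpecRad ((A x).map fun x => (x : ℂ))) ^ t
        * (matSpecRad ((A y).map fun x => (x : ℂ))) ^ r)) :=
    (hxt.rpow_const (Or.inr ht.le)).mul (hyt.rpow_const (Or.inr hr.le))
  have hgeo : matSpecRad ((A m).map fun x => (x : ℂ))
      ≤ (matSpecRad ((A x).map fun x => (x : ℂ))) ^ t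
        * (matSpecRad ((A y).map fun x => (x : ℂ))) ^ r :=
    le_of_tendsto_of_tendsto' hmt hlim hroot
  calc matSpecRad ((A m).map fun x => (x : ℂ))
      ≤ (matSpecRad ((A x).map fun x => (x : ℂ))) ^ t
        * (matSpecRad ((A y).map fun x => (x : ℂ))) ^ r := hgeo
    _ ≤ t * matSpecRad ((A x).map fun x => (x : ℂ))
        + r * matSpecRad ((A y).map fun x => (x : ℂ)) :=
        Real.geom_mean_le_arith_mean2_weighted ht.le hr.le hx0 hy0 htr
end
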